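/- arXiv:2408.04185 — 3 statements merged into one kernel-verified Lean document; each statement's English description precedes it below -/
import Mathlib

section
/- Let n and r be integers with 1 ≤ r ≤ n, and let π ∈ S_{n-1}. Define S(π) = {π_i : 2 ≤ i ≤ n-1 and π_{i-1} ≥ π_i + r} ∪ {π_i : 1 ≤ i ≤ n-1 and π_i > n - r}. Then |S(π)| = rdes(π) + r - 1. -/
open Finset

/-- The value of the permutation `π ∈ S_n` at the (1-based) position `i`,
in one-line notation with letters `1,…,n`; `0` if `i` is out of range. -/
def pval {n : ℕ} (π : Equiv.Perm (Fin n)) (i : ℕ) : ℕ :=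
  if h : 1 ≤ i ∧ i ≤ n then ((π ⟨i - 1, by omega⟩ : Fin n) : ℕ) + 1 else 0

/-- The number of inversions of a word `w`, i.e. pairs of positions `i < j`
with `w_i > w_j`. -/
def winv (w : List ℕ) : ℕ :=
  ((Finset.range w.length ×ˢ Finset.range w.length).filter
    (fun p => p.1 < p.2 ∧ w.getD p.2 0 < w.getD p.1 0)).card

/-- `rDes(π) = {i ∈ [n-1] : π_i ≥ π_{i+1} + r}`. -/
def rDesSet {n : ℕ} (r : ℕ) (π : Equiv.Perm (Fin n)) : Finset ℕ :=
  (Finset.Icc 1 (n - 1)).filter (fun i => pval π (i + 1) + r ≤ pval π i)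

/-- The `r`-descent number `rdes(π)`. -/
def rdes {n : ℕ} (r : ℕ) (π : Equiv.Perm (Fin n)) : ℕ := (rDesSet r π).card

/-- `rInv(π) = {(i,j) : i < j, π_i > π_j, π_i < π_j + r}`. -/
def rInvSet {n : ℕ} (r : ℕ) (π : Equiv.Perm (Fin n)) : Finset (ℕ × ℕ) :=
  ((Finset.Icc 1 n) ×ˢ (Finset.Icc 1 n)).filter
    (fun p => p.1 < p.2 ∧ pval π p.2 < pval π p.1 ∧ pval π p.1 < pval π p.2 + r)

/-- The `r`-major index `rmaj(π) = ∑_{i ∈ rDes(π)} i + |rInv(π)|`. -/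
def rmaj {n : ℕ} (r : ℕ) (π : Equiv.Perm (Fin n)) : ℕ :=
  (∑ i ∈ rDesSet r π, i) + (rInvSet r π).card

/-- The inversion number `inv(π)`: the number of pairs `i < j` with `π_i > π_j`. -/
def invStat {n : ℕ} (π : Equiv.Perm (Fin n)) : ℕ :=
  (((Finset.Icc 1 n) ×ˢ (Finset.Icc 1 n)).filter
    (fun p => p.1 < p.2 ∧ pval π p.2 < pval π p.1)).card

/-- `Excp_r(π)`: the set of `r`-level excedance places, i.e. indices `i`
with `π_i > i` and `π_i ≥ r`. -/
def excpSet {n : ℕ} (r : ℕ) (π : Equiv.Perm (Fin n)) : Finset ℕ :=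
  (Finset.Icc 1 n).filter (fun i => i < pval π i ∧ r ≤ pval π i)

/-- `Exc_r(π)`: the subword of `π` on the `r`-level excedance places,
in increasing order of position. -/
def excWord {n : ℕ} (r : ℕ) (π : Equiv.Perm (Fin n)) : List ℕ :=
  ((excpSet r π).sort (· ≤ ·)).map (pval π)

/-- `Nexc_r(π)`: the subword of `π` on the non-`r`-level-excedance places,
in increasing order of position. -/
def nexcWord {n : ℕ} (r : ℕ) (π : Equiv.Perm (Fin n)) : List ℕ :=
  (((Finset.Icc 1 n) \ excpSet r π).sort (· ≤ ·)).map (pval π)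

/-- The `r`-level Denert statistic
`den_r(π) = ∑_{i ∈ Excp_r(π)} i + inv(Exc_r(π)) + inv(Nexc_r(π))`. -/
def denr {n : ℕ} (r : ℕ) (π : Equiv.Perm (Fin n)) : ℕ :=
  (∑ i ∈ excpSet r π, i) + winv (excWord r π) + winv (nexcWord r π)

/-- The `r`-level excedance number `exc_r(π) = |{i : π_i > i ≥ r}|`. -/
def excr {n : ℕ} (r : ℕ) (π : Equiv.Perm (Fin n)) : ℕ :=
  ((Finset.Icc 1 n).filter (fun i => r ≤ i ∧ i < pval π i)).card

lemma pval_le {n : ℕ} (π : Equiv.Perm (Fin n)) (i : ℕ) : pval π i ≤ n := by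
  unfold pval; split
  · exact (π _).isLt
  · omega

lemma pval_pos {n : ℕ} (π : Equiv.Perm (Fin n)) {i : ℕ} (h1 : 1 ≤ i) (h2 : i ≤ n) :
    1 ≤ pval π i := by
  unfold pval; rw [dif_pos ⟨h1, h2⟩]; omega

lemma pval_injOn {n : ℕ} (π : Equiv.Perm (Fin n)) :
    Set.InjOn (pval π) (Finset.Icc 1 n) := by
  intro i hi j hj hij
  simp only [Finset.coe_Icc, Set.mem_Icc] at hi hj
  unfold pval at hij
  rw [dif_pos ⟨hi.1, hi.2⟩, dif_pos ⟨hj.1, hj.2⟩] at hij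
  have h1 : (π ⟨i - 1, by omega⟩) = (π ⟨j - 1, by omega⟩) := Fin.val_injective (by omega)
  have h2 := π.injective h1
  have h3 : i - 1 = j - 1 := Fin.mk.inj_iff.mp h2
  omega

lemma pval_surj {n : ℕ} (π : Equiv.Perm (Fin n)) (v : ℕ) (h1 : 1 ≤ v) (h2 : v ≤ n) :
    ∃ i, 1 ≤ i ∧ i ≤ n ∧ pval π i = v := by
  have hb : v - 1 < n := by omega
  refine ⟨(π.symm ⟨v - 1, hb⟩ : ℕ) + 1, by omega,
    by have := (π.symm ⟨v - 1, hb⟩).isLt; omega, ?_⟩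
  unfold pval
  rw [dif_pos ⟨by omega, by have := (π.symm ⟨v - 1, hb⟩).isLt; omega⟩]
  have he : (⟨(π.symm ⟨v - 1, hb⟩ : ℕ) + 1 - 1, by omega⟩ : Fin n) = π.symm ⟨v - 1, hb⟩ := by
    ext; simp
  rw [he, Equiv.apply_symm_apply]
  simp; omega

/-- For 1 ≤ r ≤ n and π ∈ S_{n-1}, the set
S(π) = {π_i : 2 ≤ i ≤ n-1, π_{i-1} ≥ π_i + r} ∪ {π_i : π_i > n - r}
has cardinality rdes(π) + r - 1. -/
theorem card_S_eq_rdes_add (n r : ℕ) (hr : 1 ≤ r) (hrn : r ≤ n)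
    (π : Equiv.Perm (Fin (n - 1))) :
    (((Finset.Icc 2 (n - 1)).filter
        (fun i => pval π i + r ≤ pval π (i - 1))).image (pval π) ∪
      ((Finset.Icc 1 (n - 1)).filter
        (fun i => n - r < pval π i)).image (pval π)).card
      = rdes r π + r - 1 := by
  set A := (Finset.Icc 2 (n - 1)).filter (fun i => pval π i + r ≤ pval π (i - 1)) with hA
  set B := (Finset.Icc 1 (n - 1)).filter (fun i => n - r < pval π i) with hB
  -- B's image is Icc (n - r + 1) (n - 1)
  have hBim : B.image (pval π) = Finset.Icc (n - r + 1) (n - 1) := by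
    ext v
    simp only [Finset.mem_image, Finset.mem_filter, Finset.mem_Icc, hB]
    constructor
    · rintro ⟨i, ⟨⟨hi1, hi2⟩, hlt⟩, rfl⟩
      have := pval_le π i
      omega
    · rintro ⟨hv1, hv2⟩
      obtain ⟨i, h1, h2, h3⟩ := pval_surj π v (by omega) (by omega)
      exact ⟨i, ⟨⟨h1, h2⟩, by omega⟩, h3⟩
  -- disjointness
  have hdisj : Disjoint (A.image (pval π)) (B.image (pval π)) := by
    rw [Finset.disjoint_left]
    intro v hv hv'
    rw [hBim, Finset.mem_Icc] at hv'
    simp only [Finset.mem_image, Finset.mem_filter, Finset.mem_Icc, hA] at hv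
    obtain ⟨i, ⟨⟨hi1, hi2⟩, hle⟩, rfl⟩ := hv
    have := pval_le π (i - 1)
    omega
  rw [Finset.card_union_of_disjoint hdisj, hBim, Nat.card_Icc]
  have hAcard : (A.image (pval π)).card = rdes r π := by
    rw [Finset.card_image_of_injOn ((pval_injOn π).mono ?_)]
    · unfold rdes rDesSet
      apply Finset.card_nbij' (fun i => i - 1) (fun i => i + 1)
      · intro i hi
        simp only [Finset.mem_coe, Finset.mem_filter, Finset.mem_Icc, hA] at hi ⊢
        have he : i - 1 + 1 = i := by omega
        rw [he]
        omega
      · intro i hi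
        simp only [Finset.mem_coe, Finset.mem_filter, Finset.mem_Icc, hA] at hi ⊢
        have he : i + 1 - 1 = i := by omega
        rw [he]
        omega
      · intro i hi
        simp only [Finset.mem_coe, Finset.mem_filter, Finset.mem_Icc, hA] at hi ⊢
        omega
      · intro i hi
        simp only [Finset.mem_coe, Finset.mem_filter, Finset.mem_Icc] at hi ⊢
        omega
    · intro i hi
      simp only [hA, Finset.coe_filter, Set.mem_setOf_eq, Finset.mem_Icc] at hi
      simp only [Finset.coe_Icc, Set.mem_Icc]
      omega
  rw [hAcard]
  omega
end

section
/- For every positive integer n and every positive integer r, the statistics rmaj and inv are equidistributed over S_n: ∑_{π∈S_n} q^{rmaj(π)} = ∑_{π∈S_n} q^{inv(π)} = [n]_q [n-1]_q ⋯ [1]_q, where [k]_q = 1 + q + q² + ⋯ + q^{k-1}. Equivalently, for every nonnegative integer m, the number of π ∈ S_n with rmaj(π) = m equals the number of π ∈ S_n with inv(π) = m. -/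
open Finset

/-! Helper sum lemmas -/

lemma sumSplit (f : ℕ → ℕ) {a b c : ℕ} (h1 : a ≤ b + 1) (h2 : b ≤ c) :
    ∑ i ∈ Icc a c, f i = (∑ i ∈ Icc a b, f i) + ∑ i ∈ Icc (b+1) c, f i := by
  have hU : Icc a c = Icc a b ∪ Icc (b+1) c := by
    ext x; simp only [mem_Icc, mem_union]; omega
  rw [hU, Finset.sum_union]
  simp only [Finset.disjoint_left, mem_Icc]
  omega

lemma sumShift (f : ℕ → ℕ) (a b : ℕ) :
    ∑ i ∈ Icc (a+1) (b+1), f i = ∑ i ∈ Icc a b, f (i+1) := by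
  rw [← Finset.map_add_right_Icc a b 1, Finset.sum_map]
  simp [addRightEmbedding]

lemma sumSplit3 (h : ℕ → ℕ) {k n : ℕ} (hk : k ≤ n) :
    ∑ i ∈ Icc 1 (n+1), h i
      = (∑ i ∈ Icc 1 k, h i) + h (k+1) + ∑ i ∈ Icc (k+1) n, h (i+1) := by
  rw [sumSplit h (a := 1) (b := k) (c := n+1) (by omega) (by omega),
      sumSplit h (a := k+1) (b := k+1) (c := n+1) (by omega) (by omega)]
  rw [Finset.Icc_self, Finset.sum_singleton, sumShift]
  ring

/-! Word statistics -/

def aval (w : List ℕ) (i : ℕ) : ℕ := w.getD (i-1) 0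

def dSum (r : ℕ) (w : List ℕ) : ℕ :=
  ∑ i ∈ Icc 1 (w.length - 1), if aval w (i+1) + r ≤ aval w i then i else 0

def pCnt (Q : ℕ → ℕ → Prop) [DecidableRel Q] (w : List ℕ) : ℕ :=
  ∑ i ∈ Icc 1 w.length, ∑ j ∈ Icc 1 w.length,
    if i < j ∧ Q (aval w i) (aval w j) then 1 else 0

def rmajW (r : ℕ) (w : List ℕ) : ℕ :=
  dSum r w + pCnt (fun x y => y < x ∧ x < y + r) w

def invW (w : List ℕ) : ℕ := pCnt (fun x y => y < x) w

lemma aval_le {u : List ℕ} (hu : ∀ x ∈ u, x ≤ u.length) (i : ℕ) :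
    aval u i ≤ u.length := by
  unfold aval
  rcases lt_or_ge (i-1) u.length with h | h
  · rw [List.getD_eq_getElem u 0 h]
    exact hu _ (List.getElem_mem h)
  · rw [List.getD_eq_default u 0 h]
    exact Nat.zero_le _

lemma aval_v_low {u : List ℕ} {k : ℕ} (hk : k ≤ u.length) (M : ℕ) {i : ℕ}
    (h1 : 1 ≤ i) (h2 : i ≤ k) : aval (u.insertIdx k M) i = aval u i := by
  have hi : i - 1 < u.length := by omega
  have hi2 : i - 1 < (u.insertIdx k M).length := by
    rw [List.length_insertIdx_of_le_length hk _]; omega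
  unfold aval
  rw [List.getD_eq_getElem _ 0 hi2, List.getD_eq_getElem _ 0 hi]
  exact List.getElem_insertIdx_of_lt (by omega) hi2

lemma aval_v_mid {u : List ℕ} {k : ℕ} (hk : k ≤ u.length) (M : ℕ) :
    aval (u.insertIdx k M) (k+1) = M := by
  have hk2 : k < (u.insertIdx k M).length := by
    rw [List.length_insertIdx_of_le_length hk _]; omega
  unfold aval
  simp only [Nat.add_sub_cancel]
  rw [List.getD_eq_getElem _ 0 hk2]
  exact List.getElem_insertIdx_self hk2

lemma aval_v_high {u : List ℕ} {k : ℕ} (hk : k ≤ u.length) (M : ℕ) {i : ℕ}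
    (h1 : k + 1 ≤ i) (h2 : i ≤ u.length) :
    aval (u.insertIdx k M) (i+1) = aval u i := by
  obtain ⟨t, rfl⟩ : ∃ t, i = k + t + 1 := ⟨i - k - 1, by omega⟩
  have hi : k + t < u.length := by omega
  have hi2 : k + t + 1 < (u.insertIdx k M).length := by
    rw [List.length_insertIdx_of_le_length hk _]; omega
  unfold aval
  simp only [Nat.add_sub_cancel]
  rw [List.getD_eq_getElem _ 0 hi2, List.getD_eq_getElem _ 0 hi]
  exact List.getElem_insertIdx_add_succ u M k t hi

lemma dSum_insert (u : List ℕ) (r k : ℕ) (hu : ∀ x ∈ u, x ≤ u.length)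
    (hk : k ≤ u.length) :
    dSum r (u.insertIdx k (u.length + 1))
      + (if 1 ≤ k ∧ k < u.length ∧ aval u (k+1) + r ≤ aval u k then k else 0)
    = dSum r u
      + (if k < u.length ∧ aval u (k+1) + r ≤ u.length + 1 then k + 1 else 0)
      + ∑ j ∈ Icc (k+1) (u.length - 1),
          (if aval u (j+1) + r ≤ aval u j then 1 else 0) := by
  set n := u.length with hn
  set M := n + 1 with hM
  set v := u.insertIdx k M with hv
  have hvlen : v.length = n + 1 := List.length_insertIdx_of_le_length hk _
  have hval : ∀ i, aval u i ≤ n := aval_le hu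
  have hd : dSum r v = ∑ i ∈ Icc 1 n, (if aval v (i+1) + r ≤ aval v i then i else 0) := by
    unfold dSum; rw [hvlen]; rfl
  rcases eq_or_lt_of_le hk with hkn | hkn
  · -- k = n
    have hicc : Icc (k+1) (n-1) = ∅ := Finset.Icc_eq_empty (by omega)
    rw [hicc, Finset.sum_empty, if_neg (by omega), if_neg (by omega)]
    rw [hd]
    rcases Nat.eq_zero_or_pos n with h0 | h0
    · have hu0 : u = [] := List.length_eq_zero_iff.mp (by omega)
      subst hu0
      simp_all [dSum]
    · rw [sumSplit _ (a := 1) (b := n-1) (c := n) (by omega) (by omega)]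
      have hlast : ∑ i ∈ Icc (n-1+1) n, (if aval v (i+1) + r ≤ aval v i then i else 0) = 0 := by
        have hnn : n - 1 + 1 = n := by omega
        rw [hnn, Finset.Icc_self, Finset.sum_singleton]
        have ev : aval v (n+1) = M := by
          rw [show n + 1 = k + 1 by omega]
          exact aval_v_mid hk M
        have ev2 : aval v n = aval u n := aval_v_low hk M (by omega) (by omega)
        rw [ev, ev2, if_neg (by have := hval n; omega)]
      rw [hlast, Nat.add_zero, Nat.add_zero]
      unfold dSum
      rw [← hn]
      apply Finset.sum_congr rfl
      intro i hi
      rw [mem_Icc] at hi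
      rw [aval_v_low hk M (by omega) (by omega), aval_v_low hk M (by omega) (by omega)]
  · -- k < n
    have e1 : dSum r v
        = (∑ i ∈ Icc 1 k, (if aval v (i+1) + r ≤ aval v i then i else 0))
          + (if aval u (k+1) + r ≤ M then k+1 else 0)
          + ((∑ j ∈ Icc (k+1) (n-1), (if aval u (j+1) + r ≤ aval u j then j else 0))
             + (∑ j ∈ Icc (k+1) (n-1), (if aval u (j+1) + r ≤ aval u j then 1 else 0))) := by
      have emid : (if aval v (k+1+1) + r ≤ aval v (k+1) then k+1 else 0)
          = (if aval u (k+1) + r ≤ M then k+1 else 0) := by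
        rw [aval_v_mid hk M, aval_v_high hk M (by omega) (by omega)]
      have etail : ∑ i ∈ Icc (k+1+1) n, (if aval v (i+1) + r ≤ aval v i then i else 0)
          = (∑ j ∈ Icc (k+1) (n-1), (if aval u (j+1) + r ≤ aval u j then j else 0))
             + (∑ j ∈ Icc (k+1) (n-1), (if aval u (j+1) + r ≤ aval u j then 1 else 0)) := by
        have hshift : Icc (k+1+1) n = Icc (k+1+1) (n-1+1) := by congr 1; omega
        rw [hshift, sumShift, ← Finset.sum_add_distrib]
        apply Finset.sum_congr rfl
        intro j hj
        rw [mem_Icc] at hj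
        rw [aval_v_high hk M (by omega) (by omega), aval_v_high hk M (by omega) (by omega)]
        split <;> omega
      rw [hd, sumSplit _ (a := 1) (b := k) (c := n) (by omega) (by omega),
          sumSplit _ (a := k+1) (b := k+1) (c := n) (by omega) (by omega),
          Finset.Icc_self, Finset.sum_singleton, emid, etail]
      omega
    have e2 : ∑ i ∈ Icc 1 k, (if aval u (i+1) + r ≤ aval u i then i else 0)
        = (∑ i ∈ Icc 1 k, (if aval v (i+1) + r ≤ aval v i then i else 0))
          + (if 1 ≤ k ∧ aval u (k+1) + r ≤ aval u k then k else 0) := by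
      have hpt : ∀ i ∈ Icc 1 k,
          (if aval u (i+1) + r ≤ aval u i then i else 0)
          = (if aval v (i+1) + r ≤ aval v i then i else 0)
            + (if i = k then (if aval u (k+1) + r ≤ aval u k then i else 0) else 0) := by
        intro i hi
        rw [mem_Icc] at hi
        rcases eq_or_lt_of_le hi.2 with hik | hik
        · rw [hik]
          rw [aval_v_mid hk M, aval_v_low hk M (by omega) (by omega)]
          rw [if_neg (show ¬(M + r ≤ aval u k) by have := hval k; omega), if_pos rfl]
          omega
        · rw [aval_v_low hk M (by omega) (by omega), aval_v_low hk M (by omega) (by omega),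
              if_neg (show ¬(i = k) by omega)]
          omega
      rw [Finset.sum_congr rfl hpt, Finset.sum_add_distrib]
      congr 1
      rw [Finset.sum_ite_eq' (Icc 1 k) k (fun i => if aval u (k+1) + r ≤ aval u k then i else 0)]
      simp only [mem_Icc]
      by_cases h1 : 1 ≤ k
      · by_cases h2 : aval u (k+1) + r ≤ aval u k <;> simp [h1, h2]
      · have hk0 : k = 0 := by omega
        subst hk0; simp
    have e3 : dSum r u
        = (∑ i ∈ Icc 1 k, (if aval u (i+1) + r ≤ aval u i then i else 0))
          + ∑ j ∈ Icc (k+1) (n-1), (if aval u (j+1) + r ≤ aval u j then j else 0) := by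
      unfold dSum
      rw [← hn, sumSplit _ (a := 1) (b := k) (c := n-1) (by omega) (by omega)]
    have g1 : (if 1 ≤ k ∧ k < n ∧ aval u (k+1) + r ≤ aval u k then k else 0)
        = (if 1 ≤ k ∧ aval u (k+1) + r ≤ aval u k then k else 0) :=
      if_congr (by constructor <;> (intro h; tauto)) rfl rfl
    have g2 : (if k < n ∧ aval u (k+1) + r ≤ M then k + 1 else 0)
        = (if aval u (k+1) + r ≤ M then k + 1 else 0) :=
      if_congr (by constructor <;> (intro h; tauto)) rfl rfl
    rw [g1, g2]
    omega

lemma pCnt_insert (u : List ℕ) (k : ℕ) (Q : ℕ → ℕ → Prop) [DecidableRel Q]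
    (hk : k ≤ u.length) :
    pCnt Q (u.insertIdx k (u.length + 1))
    = pCnt Q u
      + (∑ t ∈ Icc (k+1) u.length, if Q (u.length + 1) (aval u t) then 1 else 0)
      + (∑ t ∈ Icc 1 k, if Q (aval u t) (u.length + 1) then 1 else 0) := by
  set n := u.length with hn
  set M := n + 1 with hM
  set v := u.insertIdx k M with hv
  have hvlen : v.length = n + 1 := List.length_insertIdx_of_le_length hk _
  have hmid : aval v (k+1) = M := aval_v_mid hk M
  have hlow : ∀ i, 1 ≤ i → i ≤ k → aval v i = aval u i := fun i h1 h2 => aval_v_low hk M h1 h2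
  have hhigh : ∀ i, k+1 ≤ i → i ≤ n → aval v (i+1) = aval u i := fun i h1 h2 => aval_v_high hk M h1 h2
  have hp : pCnt Q v = ∑ i ∈ Icc 1 (n+1), ∑ j ∈ Icc 1 (n+1),
      (if i < j ∧ Q (aval v i) (aval v j) then 1 else 0) := by
    unfold pCnt; rw [hvlen]
  rw [hp]
  -- inner splits
  have inner : ∀ i, ∑ j ∈ Icc 1 (n+1), (if i < j ∧ Q (aval v i) (aval v j) then 1 else 0)
      = (∑ j ∈ Icc 1 k, (if i < j ∧ Q (aval v i) (aval v j) then 1 else 0))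
        + (if i < k+1 ∧ Q (aval v i) M then 1 else 0)
        + (∑ j ∈ Icc (k+1) n, (if i < j+1 ∧ Q (aval v i) (aval v (j+1)) then 1 else 0)) := by
    intro i
    rw [sumSplit3 _ hk, hmid]
  rw [Finset.sum_congr rfl (fun i _ => inner i), Finset.sum_add_distrib, Finset.sum_add_distrib]
  rw [sumSplit3 (fun i => ∑ j ∈ Icc 1 k, (if i < j ∧ Q (aval v i) (aval v j) then 1 else 0)) hk,
      sumSplit3 (fun i => if i < k+1 ∧ Q (aval v i) M then 1 else 0) hk,
      sumSplit3 (fun i => ∑ j ∈ Icc (k+1) n, (if i < j+1 ∧ Q (aval v i) (aval v (j+1)) then 1 else 0)) hk]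
  -- now evaluate the nine pieces
  have p11 : ∑ i ∈ Icc 1 k, ∑ j ∈ Icc 1 k, (if i < j ∧ Q (aval v i) (aval v j) then 1 else 0)
      = ∑ i ∈ Icc 1 k, ∑ j ∈ Icc 1 k, (if i < j ∧ Q (aval u i) (aval u j) then 1 else 0) := by
    refine Finset.sum_congr rfl fun i hi => Finset.sum_congr rfl fun j hj => ?_
    rw [mem_Icc] at hi hj
    rw [hlow i hi.1 hi.2, hlow j hj.1 hj.2]
  have p12 : (∑ i ∈ Icc 1 k, (if i < k+1 ∧ Q (aval v i) M then 1 else 0))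
      = ∑ t ∈ Icc 1 k, (if Q (aval u t) M then 1 else 0) := by
    refine Finset.sum_congr rfl fun i hi => ?_
    rw [mem_Icc] at hi
    rw [hlow i hi.1 hi.2, if_congr (and_iff_right (by omega)) rfl rfl]
  have p13 : ∑ i ∈ Icc 1 k, ∑ j ∈ Icc (k+1) n, (if i < j+1 ∧ Q (aval v i) (aval v (j+1)) then 1 else 0)
      = ∑ i ∈ Icc 1 k, ∑ j ∈ Icc (k+1) n, (if i < j ∧ Q (aval u i) (aval u j) then 1 else 0) := by
    refine Finset.sum_congr rfl fun i hi => Finset.sum_congr rfl fun j hj => ?_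
    rw [mem_Icc] at hi hj
    rw [hlow i hi.1 hi.2, hhigh j hj.1 hj.2,
        if_congr (and_congr_left fun _ => show (i < j+1) ↔ (i < j) by omega) rfl rfl]
  have p21 : ∑ j ∈ Icc 1 k, (if k+1 < j ∧ Q (aval v (k+1)) (aval v j) then 1 else 0) = 0 := by
    apply Finset.sum_eq_zero
    intro j hj; rw [mem_Icc] at hj
    rw [if_neg (fun hcon => absurd hcon.1 (by omega))]
  have p22 : (if k+1 < k+1 ∧ Q (aval v (k+1)) M then 1 else 0) = 0 := by
    rw [if_neg (fun hcon => absurd hcon.1 (by omega))]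
  have p23 : ∑ j ∈ Icc (k+1) n, (if k+1 < j+1 ∧ Q (aval v (k+1)) (aval v (j+1)) then 1 else 0)
      = ∑ t ∈ Icc (k+1) n, (if Q M (aval u t) then 1 else 0) := by
    refine Finset.sum_congr rfl fun j hj => ?_
    rw [mem_Icc] at hj
    rw [hmid, hhigh j hj.1 hj.2,
        if_congr (and_iff_right (by omega)) rfl rfl]
  have p31 : ∑ i ∈ Icc (k+1) n, ∑ j ∈ Icc 1 k, (if i+1 < j ∧ Q (aval v (i+1)) (aval v j) then 1 else 0) = 0 := by
    apply Finset.sum_eq_zero; intro i hi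
    apply Finset.sum_eq_zero; intro j hj
    rw [mem_Icc] at hi hj
    rw [if_neg (fun hcon => absurd hcon.1 (by omega))]
  have p32 : ∑ i ∈ Icc (k+1) n, (if i+1 < k+1 ∧ Q (aval v (i+1)) M then 1 else 0) = 0 := by
    apply Finset.sum_eq_zero; intro i hi; rw [mem_Icc] at hi
    rw [if_neg (fun hcon => absurd hcon.1 (by omega))]
  have p33 : ∑ i ∈ Icc (k+1) n, ∑ j ∈ Icc (k+1) n, (if i+1 < j+1 ∧ Q (aval v (i+1)) (aval v (j+1)) then 1 else 0)
      = ∑ i ∈ Icc (k+1) n, ∑ j ∈ Icc (k+1) n, (if i < j ∧ Q (aval u i) (aval u j) then 1 else 0) := by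
    refine Finset.sum_congr rfl fun i hi => Finset.sum_congr rfl fun j hj => ?_
    rw [mem_Icc] at hi hj
    rw [hhigh i hi.1 hi.2, hhigh j hj.1 hj.2,
        if_congr (and_congr_left fun _ => show (i+1 < j+1) ↔ (i < j) by omega) rfl rfl]
  have pu : pCnt Q u
      = (∑ i ∈ Icc 1 k, ∑ j ∈ Icc 1 k, (if i < j ∧ Q (aval u i) (aval u j) then 1 else 0))
        + (∑ i ∈ Icc 1 k, ∑ j ∈ Icc (k+1) n, (if i < j ∧ Q (aval u i) (aval u j) then 1 else 0))
        + ((∑ i ∈ Icc (k+1) n, ∑ j ∈ Icc 1 k, (if i < j ∧ Q (aval u i) (aval u j) then 1 else 0))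
        + (∑ i ∈ Icc (k+1) n, ∑ j ∈ Icc (k+1) n, (if i < j ∧ Q (aval u i) (aval u j) then 1 else 0))) := by
    unfold pCnt
    rw [← hn]
    rw [sumSplit _ (a := 1) (b := k) (c := n) (by omega) (by omega)]
    congr 1
    · rw [← Finset.sum_add_distrib]
      refine Finset.sum_congr rfl fun i _ => ?_
      rw [sumSplit _ (a := 1) (b := k) (c := n) (by omega) (by omega)]
    · rw [← Finset.sum_add_distrib]
      refine Finset.sum_congr rfl fun i _ => ?_
      rw [sumSplit _ (a := 1) (b := k) (c := n) (by omega) (by omega)]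
  have p41 : ∑ i ∈ Icc (k+1) n, ∑ j ∈ Icc 1 k, (if i < j ∧ Q (aval u i) (aval u j) then 1 else 0) = 0 := by
    apply Finset.sum_eq_zero; intro i hi
    apply Finset.sum_eq_zero; intro j hj
    rw [mem_Icc] at hi hj
    rw [if_neg (fun hcon => absurd hcon.1 (by omega))]
  rw [p11, p12, p13, p21, p22, p23, p31, p32, p33, pu, p41]
  omega

/-! The insertion increment and its properties -/

def dind (u : List ℕ) (r t : ℕ) : ℕ :=
  if t < u.length ∧ aval u (t+1) + r ≤ aval u t then 1 else 0

def bigind (u : List ℕ) (r t : ℕ) : ℕ :=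
  if u.length + 1 < aval u t + r then 1 else 0

def hseg (u : List ℕ) (r s e : ℕ) : ℕ :=
  ∑ t ∈ Icc s e, (bigind u r t + dind u r t)

def Fk (u : List ℕ) (r k : ℕ) : ℕ := hseg u r (k+1) u.length

def Δins (u : List ℕ) (r k : ℕ) : ℕ :=
  if k = u.length then 0
  else if u.length + 1 < aval u (k+1) + r then Fk u r k
  else if 1 ≤ k ∧ aval u (k+1) + r ≤ aval u k then Fk u r k + 1
  else Fk u r k + k + 1

lemma dind_le (u : List ℕ) (r t : ℕ) : dind u r t ≤ 1 := by
  unfold dind; split <;> omega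

lemma bigind_le (u : List ℕ) (r t : ℕ) : bigind u r t ≤ 1 := by
  unfold bigind; split <;> omega

lemma dind_bigind (u : List ℕ) (r t : ℕ) (hu : ∀ x ∈ u, x ≤ u.length) :
    dind u r t + bigind u r (t+1) ≤ 1 := by
  unfold dind bigind
  split
  · rename_i h
    rw [if_neg]
    have := aval_le hu t
    omega
  · have := bigind_le u r (t+1)
    unfold bigind at this
    omega

lemma hseg_single (u : List ℕ) (r s : ℕ) :
    hseg u r s s = bigind u r s + dind u r s := by
  unfold hseg; rw [Finset.Icc_self, Finset.sum_singleton]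

lemma hseg_split (u : List ℕ) (r : ℕ) {s b e : ℕ} (h1 : s ≤ b + 1) (h2 : b ≤ e) :
    hseg u r s e = hseg u r s b + hseg u r (b+1) e := by
  unfold hseg; exact sumSplit _ h1 h2

lemma hseg_bound (u : List ℕ) (r : ℕ) (hu : ∀ x ∈ u, x ≤ u.length) :
    ∀ m s e, e ≤ s + m → hseg u r s e ≤ bigind u r s + (e - s) + dind u r e := by
  intro m
  induction m with
  | zero =>
    intro s e he
    rcases lt_or_ge e s with h | h
    · unfold hseg
      rw [Finset.Icc_eq_empty (by omega), Finset.sum_empty]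
      omega
    · have hes : e = s := by omega
      subst hes
      rw [hseg_single]
      omega
  | succ m ih =>
    intro s e he
    rcases le_or_gt e (s + m) with h | h
    · exact ih s e h
    · have hse : s < e := by omega
      rw [hseg_split u r (b := s) (by omega) (by omega), hseg_single]
      have h1 := ih (s+1) e (by omega)
      have h2 := dind_bigind u r s hu
      have h3 := dind_le u r s
      have h4 := bigind_le u r (s+1)
      omega

lemma hseg_le (u : List ℕ) (r s e : ℕ) (hu : ∀ x ∈ u, x ≤ u.length) :
    hseg u r s e ≤ bigind u r s + (e - s) + dind u r e :=
  hseg_bound u r hu e s e (by omega)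

lemma hseg_lb (u : List ℕ) (r : ℕ) {k l : ℕ} (hkl : k < l) :
    bigind u r (k+1) + dind u r l ≤ hseg u r (k+1) l := by
  rcases eq_or_lt_of_le (show k + 1 ≤ l by omega) with h | h
  · rw [← h, hseg_single]
  · rw [hseg_split u r (b := k+1) (by omega) (by omega), hseg_single]
    have : bigind u r l + dind u r l ≤ hseg u r (k+1+1) l := by
      unfold hseg
      exact Finset.single_le_sum (f := fun t => bigind u r t + dind u r t)
        (fun t _ => Nat.zero_le _) (by rw [mem_Icc]; omega)
    omega

lemma Fk_split (u : List ℕ) (r : ℕ) {k l : ℕ} (hkl : k ≤ l) (hl : l ≤ u.length) :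
    Fk u r k = hseg u r (k+1) l + Fk u r l := by
  unfold Fk
  exact hseg_split u r (by omega) hl

/-- The insertion formula for `rmajW`. -/
lemma rmajW_insert (u : List ℕ) (r k : ℕ) (hu : ∀ x ∈ u, x ≤ u.length)
    (hk : k ≤ u.length) :
    rmajW r (u.insertIdx k (u.length + 1)) = rmajW r u + Δins u r k := by
  set n := u.length with hn
  have hval : ∀ i, aval u i ≤ n := aval_le hu
  have hds := dSum_insert u r k hu hk
  have hpc := pCnt_insert u k (fun x y => y < x ∧ x < y + r) hk
  -- rewrite the two extra sums of hpc
  have hA : (∑ t ∈ Icc (k+1) n, if (aval u t < n + 1 ∧ n + 1 < aval u t + r) then 1 else 0)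
      = ∑ t ∈ Icc (k+1) n, bigind u r t := by
    refine Finset.sum_congr rfl fun t _ => ?_
    unfold bigind
    rw [if_congr (and_iff_right (by have := hval t; omega)) rfl rfl]
  have hB : (∑ t ∈ Icc 1 k, if (n + 1 < aval u t ∧ aval u t < n + 1 + r) then 1 else 0) = 0 := by
    refine Finset.sum_eq_zero fun t _ => ?_
    rw [if_neg (fun hcon => absurd hcon.1 (by have := hval t; omega))]
  rw [hA, hB] at hpc
  -- relate the descent tail sum with dind
  have hD : (∑ j ∈ Icc (k+1) (n - 1), if aval u (j+1) + r ≤ aval u j then 1 else 0)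
      = ∑ t ∈ Icc (k+1) n, dind u r t := by
    rcases eq_or_lt_of_le hk with hkn | hkn
    · rw [← hkn, Finset.Icc_eq_empty (by omega), Finset.Icc_eq_empty (by omega)]
      simp
    · rw [sumSplit (fun t => dind u r t) (a := k+1) (b := n-1) (c := n) (by omega) (by omega)]
      have h2 : ∑ t ∈ Icc (n-1+1) n, dind u r t = 0 := by
        rw [show n - 1 + 1 = n by omega, Finset.Icc_self, Finset.sum_singleton]
        unfold dind
        rw [if_neg (fun hcon => absurd hcon.1 (by omega))]
      rw [h2, Nat.add_zero]
      refine Finset.sum_congr rfl fun t ht => ?_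
      rw [mem_Icc] at ht
      unfold dind
      rw [if_congr (and_iff_right (by omega)) rfl rfl]
  have hF : Fk u r k = (∑ t ∈ Icc (k+1) n, bigind u r t) + ∑ t ∈ Icc (k+1) n, dind u r t := by
    unfold Fk hseg
    rw [← hn, Finset.sum_add_distrib]
  unfold rmajW Δins
  rw [← hn] at hds hpc ⊢
  rcases eq_or_lt_of_le hk with hkn | hkn
  · rw [if_pos hkn]
    have e1 : Icc (k+1) (n-1) = (∅ : Finset ℕ) := Finset.Icc_eq_empty (by omega)
    have e2 : Icc (k+1) n = (∅ : Finset ℕ) := Finset.Icc_eq_empty (by omega)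
    rw [e1, Finset.sum_empty] at hds
    rw [e2, Finset.sum_empty] at hpc
    rw [if_neg (show ¬(1 ≤ k ∧ k < n ∧ aval u (k+1) + r ≤ aval u k) from
          fun hcon => absurd hcon.2.1 (by omega)),
        if_neg (show ¬(k < n ∧ aval u (k+1) + r ≤ n + 1) from
          fun hcon => absurd hcon.1 (by omega))] at hds
    omega
  · rw [if_neg (by omega)]
    by_cases hbig : n + 1 < aval u (k+1) + r
    · rw [if_pos hbig]
      rw [if_neg (show ¬(1 ≤ k ∧ k < n ∧ aval u (k+1) + r ≤ aval u k) from
            fun hcon => absurd hcon.2.2 (by have := hval k; omega)),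
          if_neg (show ¬(k < n ∧ aval u (k+1) + r ≤ n + 1) from
            fun hcon => absurd hcon.2 (by omega))] at hds
      omega
    · rw [if_neg hbig]
      by_cases hdes : 1 ≤ k ∧ aval u (k+1) + r ≤ aval u k
      · rw [if_pos hdes]
        rw [if_pos ⟨hdes.1, hkn, hdes.2⟩, if_pos ⟨hkn, by omega⟩] at hds
        omega
      · rw [if_neg hdes]
        rw [if_neg (show ¬(1 ≤ k ∧ k < n ∧ aval u (k+1) + r ≤ aval u k) from
              fun hcon => hdes ⟨hcon.1, hcon.2.2⟩),
            if_pos ⟨hkn, by omega⟩] at hds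
        omega

/-- The insertion formula for `invW`. -/
lemma invW_insert (u : List ℕ) (k : ℕ) (hu : ∀ x ∈ u, x ≤ u.length)
    (hk : k ≤ u.length) :
    invW (u.insertIdx k (u.length + 1)) = invW u + (u.length - k) := by
  set n := u.length with hn
  have hval : ∀ i, aval u i ≤ n := aval_le hu
  have hpc := pCnt_insert u k (fun x y => y < x) hk
  have hA : (∑ t ∈ Icc (k+1) n, if (aval u t < n + 1) then 1 else 0) = n - k := by
    rw [Finset.sum_congr rfl (fun t _ => if_pos (by have := hval t; omega)), Finset.sum_const,
        Nat.card_Icc]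
    simp
  have hB : (∑ t ∈ Icc 1 k, if (n + 1 < aval u t) then 1 else 0) = 0 := by
    refine Finset.sum_eq_zero fun t _ => ?_
    rw [if_neg (by have := hval t; omega)]
  unfold invW
  rw [hpc, hA, hB]
  omega

lemma dind_eq_one {u : List ℕ} {r t : ℕ} (h1 : t < u.length)
    (h2 : aval u (t+1) + r ≤ aval u t) : dind u r t = 1 := if_pos ⟨h1, h2⟩

lemma dind_eq_zero {u : List ℕ} {r t : ℕ} (h : ¬ (aval u (t+1) + r ≤ aval u t)) :
    dind u r t = 0 := if_neg (fun hcon => h hcon.2)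

lemma bigind_eq_one {u : List ℕ} {r t : ℕ} (h : u.length + 1 < aval u t + r) :
    bigind u r t = 1 := if_pos h

lemma bigind_eq_zero {u : List ℕ} {r t : ℕ} (h : ¬ (u.length + 1 < aval u t + r)) :
    bigind u r t = 0 := if_neg h

lemma dind_n (u : List ℕ) (r : ℕ) : dind u r u.length = 0 :=
  if_neg (fun hcon => absurd hcon.1 (by omega))

lemma Δins_le (u : List ℕ) (r k : ℕ) (hu : ∀ x ∈ u, x ≤ u.length)
    (hk : k ≤ u.length) : Δins u r k ≤ u.length := by
  set n := u.length with hn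
  unfold Δins
  rcases eq_or_lt_of_le hk with hkn | hkn
  · rw [if_pos hkn]; omega
  · rw [if_neg (by omega)]
    have hFb : Fk u r k ≤ bigind u r (k+1) + (n - (k+1)) + dind u r n := hseg_le u r (k+1) n hu
    rw [dind_n u r] at hFb
    by_cases hbig : n + 1 < aval u (k+1) + r
    · rw [if_pos hbig]
      have := bigind_le u r (k+1)
      omega
    · rw [if_neg hbig]
      have hb0 : bigind u r (k+1) = 0 := bigind_eq_zero hbig
      by_cases hdes : 1 ≤ k ∧ aval u (k+1) + r ≤ aval u k
      · rw [if_pos hdes]; omega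
      · rw [if_neg hdes]; omega

lemma Δins_inj (u : List ℕ) (r : ℕ) {k l : ℕ} (hu : ∀ x ∈ u, x ≤ u.length)
    (hkl : k < l) (hl : l ≤ u.length) : Δins u r k ≠ Δins u r l := by
  set n := u.length with hn
  have hFs : Fk u r k = hseg u r (k+1) l + Fk u r l := Fk_split u r (by omega) hl
  have hLB : bigind u r (k+1) + dind u r l ≤ hseg u r (k+1) l := hseg_lb u r hkl
  have hK : hseg u r (k+1) l ≤ bigind u r (k+1) + (l - (k+1)) + dind u r l :=
    hseg_le u r (k+1) l hu
  have hble := bigind_le u r (k+1)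
  have hdle := dind_le u r l
  unfold Δins
  rw [if_neg (show ¬ k = n by omega)]
  rcases eq_or_lt_of_le hl with hln | hln
  · -- l = n
    rw [if_pos hln]
    have hd0 : dind u r l = 0 := by rw [hln]; exact dind_n u r
    by_cases hbigk : n + 1 < aval u (k+1) + r
    · rw [if_pos hbigk]
      have := bigind_eq_one (t := k+1) (by omega : u.length + 1 < aval u (k+1) + r)
      omega
    · rw [if_neg hbigk]
      by_cases hdesk : 1 ≤ k ∧ aval u (k+1) + r ≤ aval u k
      · rw [if_pos hdesk]; omega
      · rw [if_neg hdesk]; omega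
  · rw [if_neg (show ¬ l = n by omega)]
    by_cases hbigl : n + 1 < aval u (l+1) + r
    · -- l in C0
      rw [if_pos hbigl]
      by_cases hbigk : n + 1 < aval u (k+1) + r
      · rw [if_pos hbigk]
        have := bigind_eq_one (t := k+1) (show u.length + 1 < aval u (k+1) + r from hbigk)
        omega
      · rw [if_neg hbigk]
        by_cases hdesk : 1 ≤ k ∧ aval u (k+1) + r ≤ aval u k
        · rw [if_pos hdesk]; omega
        · -- k in C2 : Δk = Fk k + k + 1 > Δl
          rw [if_neg hdesk]; omega
    · rw [if_neg hbigl]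
      by_cases hdesl : 1 ≤ l ∧ aval u (l+1) + r ≤ aval u l
      · -- l in C1
        rw [if_pos hdesl]
        have hd1 : dind u r l = 1 := dind_eq_one (by omega) hdesl.2
        by_cases hbigk : n + 1 < aval u (k+1) + r
        · rw [if_pos hbigk]
          have := bigind_eq_one (t := k+1) (show u.length + 1 < aval u (k+1) + r from hbigk)
          omega
        · rw [if_neg hbigk]
          by_cases hdesk : 1 ≤ k ∧ aval u (k+1) + r ≤ aval u k
          · rw [if_pos hdesk]; omega
          · rw [if_neg hdesk]; omega
      · -- l in C2
        rw [if_neg hdesl]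
        have hd0 : dind u r l = 0 := dind_eq_zero (fun hcon => hdesl ⟨by omega, hcon⟩)
        by_cases hbigk : n + 1 < aval u (k+1) + r
        · rw [if_pos hbigk]
          omega
        · rw [if_neg hbigk]
          have hb0 : bigind u r (k+1) = 0 := bigind_eq_zero hbigk
          by_cases hdesk : 1 ≤ k ∧ aval u (k+1) + r ≤ aval u k
          · rw [if_pos hdesk]; omega
          · rw [if_neg hdesk]; omega

/-! Counting infrastructure -/

lemma count_shift (n c m : ℕ) (g : ℕ → ℕ) (hb : ∀ k ≤ n, g k ≤ n)
    (hinj : ∀ k l, k ≤ n → l ≤ n → k < l → g k ≠ g l) :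
    ((range (n+1)).filter fun k => c + g k = m).card
      = ((range (n+1)).filter fun j => c + j = m).card := by
  have hInjOn : Set.InjOn g (range (n+1)) := by
    intro a ha b hb'
    simp only [coe_range, Set.mem_Iio] at ha hb'
    intro hab
    rcases lt_trichotomy a b with h|h|h
    · exact absurd hab (hinj a b (by omega) (by omega) h)
    · exact h
    · exact absurd hab.symm (hinj b a (by omega) (by omega) h)
  have himg : (range (n+1)).image g = range (n+1) := by
    apply Finset.eq_of_subset_of_card_le
    · intro x hx
      rw [Finset.mem_image] at hx
      obtain ⟨k, hk, rfl⟩ := hx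
      rw [Finset.mem_range] at hk ⊢
      exact Nat.lt_succ_of_le (hb k (by omega))
    · rw [Finset.card_image_of_injOn hInjOn]
  calc ((range (n+1)).filter fun k => c + g k = m).card
      = (((range (n+1)).filter fun k => c + g k = m).image g).card := by
        rw [Finset.card_image_of_injOn
          (hInjOn.mono (Finset.coe_subset.mpr (Finset.filter_subset _ _)))]
    _ = (((range (n+1)).image g).filter fun j => c + j = m).card := by
        rw [Finset.filter_image]
    _ = ((range (n+1)).filter fun j => c + j = m).card := by rw [himg]

def permsF (n : ℕ) : Finset (List ℕ) := (List.range' 1 n).permutations.toFinset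

lemma mem_permsF {n : ℕ} {w : List ℕ} : w ∈ permsF n ↔ w.Perm (List.range' 1 n) := by
  rw [permsF, List.mem_toFinset, List.mem_permutations]

lemma permsF_length {n : ℕ} {w : List ℕ} (h : w ∈ permsF n) : w.length = n := by
  rw [mem_permsF] at h
  simpa using h.length_eq

lemma permsF_bounds {n : ℕ} {w : List ℕ} (h : w ∈ permsF n) :
    ∀ x ∈ w, 1 ≤ x ∧ x ≤ n := by
  rw [mem_permsF] at h
  intro x hx
  have := h.mem_iff.mp hx
  rw [List.mem_range'_1] at this
  omega

lemma insertIdx_perm (x : ℕ) : ∀ (k : ℕ) (l : List ℕ), k ≤ l.length →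
    (l.insertIdx k x).Perm (x :: l)
  | 0, l, _ => by simp
  | (k+1), [], h => by simp at h
  | (k+1), a :: t, h => by
      rw [List.insertIdx_succ_cons]
      exact ((insertIdx_perm x k t (by simpa using h)).cons a).trans (List.Perm.swap x a t)

lemma insertIdx_append (s t : List ℕ) (x : ℕ) :
    (s ++ t).insertIdx s.length x = s ++ x :: t := by
  induction s with
  | nil => simp
  | cons a s ih => simpa [List.insertIdx_succ_cons] using ih

lemma range'_perm (n : ℕ) : (List.range' 1 (n+1)).Perm ((n+1) :: List.range' 1 n) := by
  rw [List.range'_concat (s := 1) (n := n)]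
  have := List.perm_append_singleton (1 + 1 * n) (List.range' 1 n)
  simpa [Nat.add_comm] using this

lemma insertIdx_inj {u u' : List ℕ} {k k' M : ℕ} (hM : M ∉ u) (hM' : M ∉ u')
    (hk : k ≤ u.length) (hk' : k' ≤ u'.length)
    (heq : u.insertIdx k M = u'.insertIdx k' M) : k = k' ∧ u = u' := by
  have hkk : k = k' := by
    rcases lt_trichotomy k k' with h|h|h
    · exfalso
      have h1 : (u.insertIdx k M)[k]? = some M := by
        rw [List.getElem?_eq_getElem (by rw [List.length_insertIdx_of_le_length hk _]; omega)]
        exact congrArg some (List.getElem_insertIdx_self (l := u) (x := M) (i := k) (by rw [List.length_insertIdx_of_le_length hk _]; omega))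
      have h2 : (u'.insertIdx k' M)[k]? = some (u'[k]'(by omega)) := by
        rw [List.getElem?_eq_getElem (by rw [List.length_insertIdx_of_le_length hk' _]; omega)]
        exact congrArg some (List.getElem_insertIdx_of_lt (l := u') (x := M) h (by rw [List.length_insertIdx_of_le_length hk' _]; omega))
      rw [heq, h2] at h1
      have h3 : u'[k]'(by omega) = M := Option.some.inj h1
      exact hM' (h3 ▸ List.getElem_mem (by omega))
    · exact h
    · exfalso
      have h1 : (u'.insertIdx k' M)[k']? = some M := by
        rw [List.getElem?_eq_getElem (by rw [List.length_insertIdx_of_le_length hk' _]; omega)]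
        exact congrArg some (List.getElem_insertIdx_self (l := u') (x := M) (i := k') (by rw [List.length_insertIdx_of_le_length hk' _]; omega))
      have h2 : (u.insertIdx k M)[k']? = some (u[k']'(by omega)) := by
        rw [List.getElem?_eq_getElem (by rw [List.length_insertIdx_of_le_length hk _]; omega)]
        exact congrArg some (List.getElem_insertIdx_of_lt (l := u) (x := M) h (by rw [List.length_insertIdx_of_le_length hk _]; omega))
      rw [← heq, h2] at h1
      have h3 : u[k']'(by omega) = M := Option.some.inj h1
      exact hM (h3 ▸ List.getElem_mem (by omega))
  refine ⟨hkk, ?_⟩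
  subst hkk
  have := congrArg (fun l => l.eraseIdx k) heq
  simpa [List.eraseIdx_insertIdx_self] using this

lemma rec_card (n : ℕ) (f : List ℕ → ℕ) (m : ℕ) :
    ((permsF (n+1)).filter fun w => f w = m).card
    = ∑ u ∈ permsF n, ((range (n+1)).filter fun k => f (u.insertIdx k (n+1)) = m).card := by
  have hRHS : ∑ u ∈ permsF n, ((range (n+1)).filter fun k => f (u.insertIdx k (n+1)) = m).card
      = ((permsF n ×ˢ range (n+1)).filter fun p => f (p.1.insertIdx p.2 (n+1)) = m).card := by
    rw [Finset.card_filter, Finset.sum_product]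
    refine Finset.sum_congr rfl fun u _ => ?_
    rw [Finset.card_filter]
  rw [hRHS]
  symm
  apply Finset.card_bij (fun p _ => p.1.insertIdx p.2 (n+1))
  · rintro ⟨u, k⟩ hp
    rw [Finset.mem_filter, Finset.mem_product, Finset.mem_range] at hp
    obtain ⟨⟨hu, hk⟩, hf⟩ := hp
    have hlen : u.length = n := permsF_length hu
    rw [Finset.mem_filter]
    refine ⟨mem_permsF.mpr ?_, hf⟩
    exact ((insertIdx_perm (n+1) k u (by omega)).trans
      ((mem_permsF.mp hu).cons (n+1))).trans (range'_perm n).symm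
  · rintro ⟨u1, k1⟩ h1 ⟨u2, k2⟩ h2 heq
    rw [Finset.mem_filter, Finset.mem_product, Finset.mem_range] at h1 h2
    obtain ⟨⟨hu1, hk1⟩, -⟩ := h1
    obtain ⟨⟨hu2, hk2⟩, -⟩ := h2
    have hlen1 : u1.length = n := permsF_length hu1
    have hlen2 : u2.length = n := permsF_length hu2
    have hM1 : (n+1) ∉ u1 := fun hmem => by have := (permsF_bounds hu1 _ hmem).2; omega
    have hM2 : (n+1) ∉ u2 := fun hmem => by have := (permsF_bounds hu2 _ hmem).2; omega
    obtain ⟨hk, hu⟩ := insertIdx_inj hM1 hM2 (by omega) (by omega) heq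
    exact Prod.ext hu hk
  · intro w hw
    rw [Finset.mem_filter] at hw
    obtain ⟨hwP, hwf⟩ := hw
    have hperm := mem_permsF.mp hwP
    have hmem : (n+1) ∈ w := hperm.mem_iff.mpr (by rw [List.mem_range'_1]; omega)
    obtain ⟨s, t, rfl⟩ := List.append_of_mem hmem
    have hst : (s ++ t).Perm (List.range' 1 n) :=
      (((List.perm_middle.symm.trans hperm).trans (range'_perm n)).cons_inv)
    have hlen : (s ++ t).length = n := by simpa using hst.length_eq
    refine ⟨(s ++ t, s.length), ?_, ?_⟩
    · rw [Finset.mem_filter, Finset.mem_product, Finset.mem_range]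
      refine ⟨⟨mem_permsF.mpr hst, by simp at hlen; omega⟩, ?_⟩
      rw [insertIdx_append]
      exact hwf
    · exact insertIdx_append s t (n+1)

/-! Bounds on the statistics -/

lemma dSum_le (r : ℕ) (w : List ℕ) : dSum r w ≤ w.length * w.length := by
  unfold dSum
  calc ∑ i ∈ Icc 1 (w.length - 1), (if aval w (i+1) + r ≤ aval w i then i else 0)
      ≤ ∑ i ∈ Icc 1 (w.length - 1), w.length := by
        refine Finset.sum_le_sum fun i hi => ?_
        rw [mem_Icc] at hi
        split <;> omega
    _ ≤ w.length * w.length := by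
        rw [Finset.sum_const, Nat.card_Icc, smul_eq_mul]
        have : w.length + 1 - 1 - 1 ≤ w.length := by omega
        exact Nat.mul_le_mul_right _ this

lemma pCnt_le (Q : ℕ → ℕ → Prop) [DecidableRel Q] (w : List ℕ) :
    pCnt Q w ≤ w.length * w.length := by
  unfold pCnt
  calc ∑ i ∈ Icc 1 w.length, ∑ j ∈ Icc 1 w.length,
        (if i < j ∧ Q (aval w i) (aval w j) then 1 else 0)
      ≤ ∑ i ∈ Icc 1 w.length, ∑ j ∈ Icc 1 w.length, 1 := by
        refine Finset.sum_le_sum fun i _ => Finset.sum_le_sum fun j _ => ?_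
        split <;> omega
    _ ≤ w.length * w.length := by
        simp [Nat.card_Icc, mul_comm]

lemma rmajW_le (r : ℕ) (w : List ℕ) : rmajW r w ≤ 2 * w.length * w.length := by
  have h1 := dSum_le r w
  have h2 := pCnt_le (fun x y => y < x ∧ x < y + r) w
  unfold rmajW
  have h3 : w.length * w.length + w.length * w.length = 2 * w.length * w.length := by ring
  omega

lemma invW_le (w : List ℕ) : invW w ≤ 2 * w.length * w.length := by
  have h2 := pCnt_le (fun x y => y < x) w
  unfold invW
  have h3 : w.length * w.length ≤ 2 * w.length * w.length := by nlinarith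
  omega

/-! Main equidistribution theorem at the word level -/

lemma main_words (r : ℕ) : ∀ n m, ((permsF n).filter fun w => rmajW r w = m).card
    = ((permsF n).filter fun w => invW w = m).card := by
  intro n
  induction n with
  | zero =>
    intro m
    have hstat : ∀ w ∈ permsF 0, (rmajW r w = m) = (invW w = m) := by
      intro w hw
      have hl : w.length = 0 := permsF_length hw
      have hw0 : w = [] := List.length_eq_zero_iff.mp hl
      subst hw0
      have h1 : rmajW r [] = 0 := by
        unfold rmajW dSum pCnt
        simp
      have h2 : invW [] = 0 := by
        unfold invW pCnt
        simp
      rw [h1, h2]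
    rw [Finset.filter_congr (fun w hw => by rw [hstat w hw])]
  | succ n ih =>
    intro m
    rw [rec_card n (rmajW r) m, rec_card n invW m]
    have E : ℕ → ℕ := fun c => ((range (n+1)).filter fun j => c + j = m).card
    -- per-u identities
    have h1 : ∀ u ∈ permsF n,
        ((range (n+1)).filter fun k => rmajW r (u.insertIdx k (n+1)) = m).card
        = ((range (n+1)).filter fun j => rmajW r u + j = m).card := by
      intro u hu
      have hlen : u.length = n := permsF_length hu
      have hle : ∀ x ∈ u, x ≤ u.length := fun x hx => by
        rw [hlen]; exact (permsF_bounds hu x hx).2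
      have hcong : ∀ k ∈ range (n+1),
          (rmajW r (u.insertIdx k (n+1)) = m) = (rmajW r u + Δins u r k = m) := by
        intro k hk
        rw [Finset.mem_range] at hk
        rw [show (n+1) = u.length + 1 by omega, rmajW_insert u r k hle (by omega)]
      rw [Finset.filter_congr (fun k hk => by rw [hcong k hk])]
      exact count_shift n (rmajW r u) m (Δins u r)
        (fun k hk => by rw [← hlen] at hk ⊢; exact Δins_le u r k hle hk)
        (fun k l hk hl hkl => by rw [← hlen] at hl; exact Δins_inj u r hle hkl hl)
    have h2 : ∀ u ∈ permsF n,
        ((range (n+1)).filter fun k => invW (u.insertIdx k (n+1)) = m).card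
        = ((range (n+1)).filter fun j => invW u + j = m).card := by
      intro u hu
      have hlen : u.length = n := permsF_length hu
      have hle : ∀ x ∈ u, x ≤ u.length := fun x hx => by
        rw [hlen]; exact (permsF_bounds hu x hx).2
      have hcong : ∀ k ∈ range (n+1),
          (invW (u.insertIdx k (n+1)) = m) = (invW u + (n - k) = m) := by
        intro k hk
        rw [Finset.mem_range] at hk
        rw [show (n+1) = u.length + 1 by omega, invW_insert u k hle (by omega), hlen]
      rw [Finset.filter_congr (fun k hk => by rw [hcong k hk])]
      exact count_shift n (invW u) m (fun k => n - k)
        (fun k hk => by show n - k ≤ n; omega)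
        (fun k l hk hl hkl => by show ¬ n - k = n - l; omega)
    rw [Finset.sum_congr rfl h1, Finset.sum_congr rfl h2]
    -- fiberwise decomposition
    have hfib : ∀ (g : List ℕ → ℕ), (∀ w ∈ permsF n, g w ≤ 2*n*n) →
        ∑ u ∈ permsF n, ((range (n+1)).filter fun j => g u + j = m).card
        = ∑ t ∈ range (2*n*n+1),
            ((permsF n).filter fun w => g w = t).card
              * ((range (n+1)).filter fun j => t + j = m).card := by
      intro g hg
      have hmp : ∀ w ∈ permsF n, g w ∈ range (2*n*n+1) := fun w hw =>
        Finset.mem_range.mpr (by have := hg w hw; omega)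
      rw [← Finset.sum_fiberwise_of_maps_to hmp
        (fun u => ((range (n+1)).filter fun j => g u + j = m).card)]
      refine Finset.sum_congr rfl fun t _ => ?_
      have hin : ∑ u ∈ (permsF n).filter (fun w => g w = t),
          ((range (n+1)).filter fun j => g u + j = m).card
          = ∑ _u ∈ (permsF n).filter (fun w => g w = t),
          ((range (n+1)).filter fun j => t + j = m).card :=
        Finset.sum_congr rfl (fun u hu => by rw [(Finset.mem_filter.mp hu).2])
      rw [hin, Finset.sum_const, smul_eq_mul]
    rw [hfib (rmajW r) (fun w hw => by
          have := rmajW_le r w; rw [permsF_length hw] at this; exact this),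
        hfib invW (fun w hw => by
          have := invW_le w; rw [permsF_length hw] at this; exact this)]
    exact Finset.sum_congr rfl fun t _ => by rw [ih t]

/-! Transfer between permutations and words -/

def wordOf {n : ℕ} (π : Equiv.Perm (Fin n)) : List ℕ :=
  List.ofFn fun i => (π i : ℕ) + 1

lemma wordOf_length {n : ℕ} (π : Equiv.Perm (Fin n)) : (wordOf π).length = n := by
  simp [wordOf]

lemma pval_aval {n : ℕ} (π : Equiv.Perm (Fin n)) {i : ℕ} (hi : 1 ≤ i) :
    pval π i = aval (wordOf π) i := by
  unfold pval aval wordOf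
  by_cases h : i ≤ n
  · rw [dif_pos ⟨hi, h⟩]
    have hlt : i - 1 < (List.ofFn fun j : Fin n => (π j : ℕ) + 1).length := by
      rw [List.length_ofFn]; omega
    rw [List.getD_eq_getElem _ 0 hlt, List.getElem_ofFn]
  · rw [dif_neg (by omega), List.getD_eq_default]
    rw [List.length_ofFn]; omega

lemma rmaj_eq {n : ℕ} (r : ℕ) (π : Equiv.Perm (Fin n)) : rmaj r π = rmajW r (wordOf π) := by
  have hlen : (wordOf π).length = n := wordOf_length π
  unfold rmaj rmajW rDesSet rInvSet dSum pCnt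
  rw [hlen]
  congr 1
  · rw [Finset.sum_filter]
    refine Finset.sum_congr rfl fun i hi => ?_
    rw [mem_Icc] at hi
    rw [pval_aval π (by omega : (1:ℕ) ≤ i+1), pval_aval π (by omega : (1:ℕ) ≤ i)]
  · rw [Finset.card_filter, Finset.sum_product]
    refine Finset.sum_congr rfl fun i hi => Finset.sum_congr rfl fun j hj => ?_
    rw [mem_Icc] at hi hj
    rw [pval_aval π (by omega : (1:ℕ) ≤ i), pval_aval π (by omega : (1:ℕ) ≤ j)]

lemma invStat_eq {n : ℕ} (π : Equiv.Perm (Fin n)) : invStat π = invW (wordOf π) := by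
  have hlen : (wordOf π).length = n := wordOf_length π
  unfold invStat invW pCnt
  rw [hlen]
  rw [Finset.card_filter, Finset.sum_product]
  refine Finset.sum_congr rfl fun i hi => Finset.sum_congr rfl fun j hj => ?_
  rw [mem_Icc] at hi hj
  rw [pval_aval π (by omega : (1:ℕ) ≤ i), pval_aval π (by omega : (1:ℕ) ≤ j)]

lemma wordOf_mem_permsF {n : ℕ} (π : Equiv.Perm (Fin n)) : wordOf π ∈ permsF n := by
  rw [mem_permsF]
  have hnodup : (wordOf π).Nodup := by
    rw [wordOf, List.nodup_ofFn]
    intro i j hij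
    exact π.injective (Fin.ext (by simpa using hij))
  have hsub : wordOf π ⊆ List.range' 1 n := by
    intro x hx
    rw [wordOf, List.mem_ofFn] at hx
    obtain ⟨i, rfl⟩ := hx
    simp only [List.mem_range'_1]
    have := (π i).isLt
    omega
  refine (List.subperm_of_subset hnodup hsub).perm_of_length_le ?_
  rw [wordOf_length, List.length_range']

lemma card_transfer (n : ℕ) (f : List ℕ → ℕ) (m : ℕ) :
    ((Finset.univ : Finset (Equiv.Perm (Fin n))).filter fun π => f (wordOf π) = m).card
    = ((permsF n).filter fun w => f w = m).card := by
  apply Finset.card_bij (fun π _ => wordOf π)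
  · intro π hπ
    rw [Finset.mem_filter] at hπ ⊢
    exact ⟨wordOf_mem_permsF π, hπ.2⟩
  · intro π1 _ π2 _ heq
    simp only [wordOf, List.ofFn_inj] at heq
    ext i
    have := congrFun heq i
    omega
  · intro w hw
    rw [Finset.mem_filter] at hw
    obtain ⟨hwP, hwf⟩ := hw
    have hperm := mem_permsF.mp hwP
    have hlen : w.length = n := permsF_length hwP
    have hnodup : w.Nodup := hperm.nodup_iff.mpr (List.nodup_range' (s := 1) (n := n))
    have hbd : ∀ (i : ℕ) (h : i < w.length), 1 ≤ w[i] ∧ w[i] ≤ n := by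
      intro i h
      have := permsF_bounds hwP _ (List.getElem_mem h)
      omega
    have hglt : ∀ (i : Fin n), w[(i : ℕ)]'(by omega) - 1 < n := by
      intro i
      have := hbd i (by omega)
      omega
    set g : Fin n → Fin n := fun i => ⟨w[(i : ℕ)]'(by omega) - 1, hglt i⟩ with hg
    have hginj : Function.Injective g := by
      intro i j hij
      rw [hg] at hij
      simp only [Fin.mk.injEq] at hij
      have h1 := hbd i (by omega)
      have h2 := hbd j (by omega)
      have : w[(i : ℕ)]'(by omega) = w[(j : ℕ)]'(by omega) := by omega
      have := (hnodup.getElem_inj_iff).mp this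
      exact Fin.ext this
    refine ⟨Equiv.ofBijective g (Finite.injective_iff_bijective.mp hginj), Finset.mem_filter.mpr ⟨Finset.mem_univ _, ?_⟩, ?_⟩
    · have : wordOf (Equiv.ofBijective g (Finite.injective_iff_bijective.mp hginj)) = w := by
        apply List.ext_getElem (by rw [wordOf_length, hlen])
        intro i h1 h2
        simp only [wordOf]
        rw [List.getElem_ofFn]
        have hb := hbd i h2
        show w[i]'h2 - 1 + 1 = w[i]'h2
        omega
      rw [this]
      exact hwf
    · apply List.ext_getElem (by rw [wordOf_length, hlen])
      intro i h1 h2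
      simp only [wordOf]
      rw [List.getElem_ofFn]
      have hb := hbd i h2
      show w[i]'h2 - 1 + 1 = w[i]'h2
      omega

/-- For n ≥ 1 and r ≥ 1 the statistics rmaj and inv are
equidistributed over S_n: for every m, the number of π ∈ S_n with
rmaj(π) = m equals the number of π ∈ S_n with inv(π) = m. -/
theorem rmaj_inv_equidistributed (n r : ℕ) (hn : 1 ≤ n) (hr : 1 ≤ r) (m : ℕ) :
    (Finset.univ.filter (fun π : Equiv.Perm (Fin n) => rmaj r π = m)).card =
    (Finset.univ.filter (fun π : Equiv.Perm (Fin n) => invStat π = m)).card := by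
  calc (Finset.univ.filter (fun π : Equiv.Perm (Fin n) => rmaj r π = m)).card
      = (Finset.univ.filter (fun π : Equiv.Perm (Fin n) => rmajW r (wordOf π) = m)).card := by
        apply congrArg
        apply Finset.filter_congr
        intro π _
        rw [rmaj_eq r π]
    _ = ((permsF n).filter fun w => rmajW r w = m).card := card_transfer n (rmajW r) m
    _ = ((permsF n).filter fun w => invW w = m).card := main_words r n m
    _ = (Finset.univ.filter (fun π : Equiv.Perm (Fin n) => invW (wordOf π) = m)).card :=
        (card_transfer n invW m).symm
    _ = (Finset.univ.filter (fun π : Equiv.Perm (Fin n) => invStat π = m)).card := by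
        apply congrArg
        apply Finset.filter_congr
        intro π _
        rw [invStat_eq π]
end

section
/- For every positive integer n and every positive integer r, the statistics rdes and exc_r are equidistributed over S_n: for every nonnegative integer k, the number of permutations π ∈ S_n with rdes(π) = k equals the number of permutations π ∈ S_n with exc_r(π) = k. -/
open Finset

-- word of a permutation
def wd {n : ℕ} (π : Equiv.Perm (Fin n)) : List ℕ := List.ofFn (fun j => (π j : ℕ) + 1)

lemma wd_length {n : ℕ} (π : Equiv.Perm (Fin n)) : (wd π).length = n := by
  simp [wd]

lemma wd_getD {n : ℕ} (π : Equiv.Perm (Fin n)) (j : ℕ) (h : j < n) :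
    (wd π).getD j 0 = (π ⟨j, h⟩ : ℕ) + 1 := by
  rw [List.getD_eq_getElem _ _ (by simp [wd_length, h])]
  simp [wd]

lemma wd_getD_ge {n : ℕ} (π : Equiv.Perm (Fin n)) (j : ℕ) (h : n ≤ j) :
    (wd π).getD j 0 = 0 := by
  rw [List.getD_eq_default]
  rw [wd_length]; exact h

lemma pval_eq_wd {n : ℕ} (π : Equiv.Perm (Fin n)) (i : ℕ) (h1 : 1 ≤ i) (h2 : i ≤ n) :
    pval π i = (wd π).getD (i - 1) 0 := by
  rw [pval, dif_pos ⟨h1, h2⟩, wd_getD π (i-1) (by omega)]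

-- recursive r-descent counter for words
def wrdes (r : ℕ) : List ℕ → ℕ
  | a :: b :: t => (if b + r ≤ a then 1 else 0) + wrdes r (b :: t)
  | _ => 0

lemma wrdes_card (r : ℕ) (w : List ℕ) :
    wrdes r w =
      ((Finset.range (w.length - 1)).filter
        (fun i => w.getD (i + 1) 0 + r ≤ w.getD i 0)).card := by
  induction w with
  | nil => simp [wrdes]
  | cons a t IH =>
    cases t with
    | nil => simp [wrdes]
    | cons b t' =>
      rw [wrdes, IH]
      rw [Finset.card_filter, Finset.card_filter]
      simp only [List.length_cons]
      have h1 : t'.length + 1 + 1 - 1 = t'.length + 1 := by omega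
      have h2 : t'.length + 1 - 1 = t'.length := by omega
      rw [h1, h2, Finset.sum_range_succ']
      simp only [List.getD_cons_succ, List.getD_cons_zero]
      ring

lemma rdes_eq_wrdes {n : ℕ} (r : ℕ) (π : Equiv.Perm (Fin n)) :
    rdes r π = wrdes r (wd π) := by
  rw [wrdes_card, wd_length, rdes, rDesSet]
  apply Finset.card_bij' (fun i _ => i - 1) (fun j _ => j + 1)
  case hi =>
    intro a ha
    simp only [Finset.mem_filter, Finset.mem_Icc] at ha
    simp only [Finset.mem_filter, Finset.mem_range]
    obtain ⟨⟨h1, h2⟩, hp⟩ := ha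
    refine ⟨by omega, ?_⟩
    rw [pval_eq_wd π (a+1) (by omega) (by omega), pval_eq_wd π a (by omega) (by omega)] at hp
    have e1 : a + 1 - 1 = (a - 1) + 1 := by omega
    rwa [e1] at hp
  case hj =>
    intro a ha
    simp only [Finset.mem_filter, Finset.mem_range] at ha
    simp only [Finset.mem_filter, Finset.mem_Icc]
    obtain ⟨h1, hp⟩ := ha
    refine ⟨⟨by omega, by omega⟩, ?_⟩
    rw [pval_eq_wd π (a+1+1) (by omega) (by omega), pval_eq_wd π (a+1) (by omega) (by omega)]
    simpa using hp
  case left_inv =>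
    intro a ha
    simp only [Finset.mem_filter, Finset.mem_Icc] at ha
    omega
  case right_inv => intro a _; omega

/-- Condition for insertion of a big letter `v` at gap `p` to create a new `r`-descent. -/
def Cnd (r v : ℕ) (w : List ℕ) (p : ℕ) : Prop :=
  p < w.length ∧ w.getD p 0 + r ≤ v ∧ (p = 0 ∨ ¬(w.getD p 0 + r ≤ w.getD (p - 1) 0))

instance (r v : ℕ) (w : List ℕ) (p : ℕ) : Decidable (Cnd r v w p) := by
  unfold Cnd; infer_instance

lemma wrdes_insertIdx (r v : ℕ) (w : List ℕ) (hv : ∀ x ∈ w, x < v) :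
    ∀ p ≤ w.length,
    wrdes r (w.insertIdx p v) = wrdes r w + (if Cnd r v w p then 1 else 0) := by
  induction w with
  | nil =>
    intro p hp
    have : p = 0 := by simpa using hp
    subst this
    simp [wrdes, Cnd]
  | cons a t IH =>
    intro p hp
    have ha : a < v := hv a (by simp)
    match p, hp with
    | 0, _ =>
      simp only [List.insertIdx_zero]
      rw [show wrdes r (v :: a :: t) = (if a + r ≤ v then 1 else 0) + wrdes r (a :: t) from rfl]
      have hcnd : Cnd r v (a :: t) 0 ↔ a + r ≤ v := by
        unfold Cnd; simp
      rw [if_congr hcnd rfl rfl]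
      omega
    | (q+1), hp =>
      simp only [List.insertIdx_succ_cons]
      have hq : q ≤ t.length := by simpa using hp
      cases t with
      | nil =>
        have : q = 0 := by simpa using hq
        subst this
        have hna : ¬ (v + r ≤ a) := by omega
        simp [wrdes, Cnd, hna]
      | cons b t' =>
        have hb : b < v := hv b (by simp)
        match q, hq with
        | 0, _ =>
          simp only [List.insertIdx_zero]
          rw [show wrdes r (a :: v :: b :: t') = (if v + r ≤ a then 1 else 0) + wrdes r (v :: b :: t') from rfl]
          rw [show wrdes r (v :: b :: t') = (if b + r ≤ v then 1 else 0) + wrdes r (b :: t') from rfl]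
          rw [show wrdes r (a :: b :: t') = (if b + r ≤ a then 1 else 0) + wrdes r (b :: t') from rfl]
          have hcnd : Cnd r v (a :: b :: t') 1 ↔ (b + r ≤ v ∧ ¬ (b + r ≤ a)) := by
            unfold Cnd; simp
          rw [if_congr hcnd rfl rfl]
          split_ifs <;> omega
        | (q'+1), hq =>
          rw [show List.insertIdx (b :: t') (q' + 1) v = b :: List.insertIdx t' q' v from rfl]
          rw [show wrdes r (a :: b :: List.insertIdx t' q' v) =
              (if b + r ≤ a then 1 else 0) + wrdes r (b :: List.insertIdx t' q' v) from rfl]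
          rw [show (b :: List.insertIdx t' q' v) = List.insertIdx (b :: t') (q'+1) v from rfl]
          rw [IH (fun x hx => hv x (by simp [hx])) (q'+1) (by simpa using hq)]
          rw [show wrdes r (a :: b :: t') = (if b + r ≤ a then 1 else 0) + wrdes r (b :: t') from rfl]
          have hcnd : Cnd r v (b :: t') (q'+1) ↔ Cnd r v (a :: b :: t') (q'+2) := by
            unfold Cnd
            simp only [List.length_cons, List.getD_cons_succ,
              show q'+1-1 = q' from rfl, show q'+2-1 = q'+1 from rfl]
            omega
          rw [if_congr hcnd rfl rfl]
          split_ifs <;> omega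

open Equiv in
/-- Insert the largest letter `n+1` at (0-based) position `p` of the word of `π`. -/
def insP {n : ℕ} (p : Fin (n + 1)) (π : Equiv.Perm (Fin n)) : Equiv.Perm (Fin (n + 1)) :=
  (finSuccEquiv' p).trans ((π.optionCongr).trans (finSuccEquiv' (Fin.last n)).symm)

lemma insP_at {n : ℕ} (p : Fin (n + 1)) (π : Equiv.Perm (Fin n)) :
    insP p π p = Fin.last n := by
  simp [insP, finSuccEquiv'_at, finSuccEquiv'_symm_none]

lemma insP_succAbove {n : ℕ} (p : Fin (n + 1)) (π : Equiv.Perm (Fin n)) (j : Fin n) :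
    insP p π (p.succAbove j) = Fin.castSucc (π j) := by
  simp [insP, finSuccEquiv'_succAbove, Fin.succAbove_last]

lemma insP_bijective {n : ℕ} :
    Function.Bijective (fun x : Fin (n + 1) × Equiv.Perm (Fin n) => insP x.1 x.2) := by
  constructor
  · rintro ⟨p, π⟩ ⟨q, ρ⟩ h
    simp only at h
    have hp : p = q := by
      have h1 : insP p π p = Fin.last n := insP_at p π
      have h2 : insP q ρ q = Fin.last n := insP_at q ρ
      rw [h] at h1
      exact (insP q ρ).injective (h1.trans h2.symm)
    subst hp
    have hπ : π = ρ := by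
      apply Equiv.ext
      intro j
      have := congrArg (fun f : Equiv.Perm (Fin (n+1)) => f (p.succAbove j)) h
      simp only [insP_succAbove] at this
      exact Fin.castSucc_injective n this
    rw [hπ]
  · intro σ
    set p := σ.symm (Fin.last n) with hp
    have hσp : σ p = Fin.last n := by simp [hp]
    set eOpt := ((finSuccEquiv' p).symm.trans (σ.trans (finSuccEquiv' (Fin.last n)))) with he
    have hnone : eOpt none = none := by
      simp [he, finSuccEquiv'_symm_none, hσp, finSuccEquiv'_at]
    have hsome : ∀ a, ∃ b, eOpt (some a) = some b := by
      intro a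
      rcases h : eOpt (some a) with _ | b
      · exfalso
        have := eOpt.injective (h.trans hnone.symm)
        simp at this
      · exact ⟨b, rfl⟩
    refine ⟨⟨p, eOpt.removeNone⟩, ?_⟩
    have hcongr : Equiv.optionCongr eOpt.removeNone = eOpt := by
      apply Equiv.ext
      rintro (_ | a)
      · simp [hnone]
      · simp only [Equiv.optionCongr_apply, Option.map_some]
        exact Equiv.removeNone_some eOpt (hsome a)
    simp only [insP, hcongr, he]
    apply Equiv.ext
    intro x
    simp [hσp]

lemma wd_insP {n : ℕ} (p : Fin (n + 1)) (π : Equiv.Perm (Fin n)) :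
    wd (insP p π) = (wd π).insertIdx p (n + 1) := by
  have hplen : (p : ℕ) ≤ (wd π).length := by rw [wd_length]; omega
  apply List.ext_getElem
  · rw [wd_length, List.length_insertIdx_of_le_length hplen, wd_length]
  · intro i h1 h2
    rw [wd_length] at h1
    have hwd : ∀ (k : ℕ) (hk : k < n + 1), (wd (insP p π))[k]'(by rw [wd_length]; omega) =
        ((insP p π) ⟨k, hk⟩ : ℕ) + 1 := by
      intro k hk
      simp only [wd, List.getElem_ofFn]
    rcases lt_trichotomy i (p : ℕ) with hlt | heq | hgt
    · have hin : i < n := by omega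
      rw [List.getElem_insertIdx_of_lt hlt]
      rw [hwd i h1]
      have hfin : (⟨i, h1⟩ : Fin (n + 1)) = p.succAbove ⟨i, hin⟩ := by
        rw [Fin.succAbove_of_castSucc_lt p ⟨i, hin⟩ (by simp [Fin.lt_def, hlt])]
        rfl
      rw [hfin, insP_succAbove]
      simp [wd]
    · subst heq
      rw [List.getElem_insertIdx_self]
      rw [hwd _ h1]
      have : (⟨(p : ℕ), h1⟩ : Fin (n + 1)) = p := rfl
      rw [this, insP_at]
      simp
    · obtain ⟨k, rfl⟩ : ∃ k, i = (p : ℕ) + k + 1 := ⟨i - (p : ℕ) - 1, by omega⟩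
      have hin : (p : ℕ) + k < n := by omega
      rw [List.getElem_insertIdx_add_succ _ _ _ _ (by rw [wd_length]; omega)]
      rw [hwd _ h1]
      have hfin : (⟨(p : ℕ) + k + 1, h1⟩ : Fin (n + 1)) =
          p.succAbove ⟨(p : ℕ) + k, hin⟩ := by
        rw [Fin.succAbove_of_le_castSucc p ⟨(p : ℕ) + k, hin⟩ (by simp [Fin.le_def])]
        simp [Fin.ext_iff]
      rw [hfin, insP_succAbove]
      simp only [wd, List.getElem_ofFn, Fin.coe_castSucc]

lemma wd_mem_lt {n : ℕ} (π : Equiv.Perm (Fin n)) : ∀ x ∈ wd π, x < n + 1 := by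
  intro x hx
  rw [wd, List.mem_ofFn] at hx
  obtain ⟨j, rfl⟩ := hx
  show (π j : ℕ) + 1 < n + 1
  have := (π j).isLt
  omega

lemma wd_getD_le {n : ℕ} (π : Equiv.Perm (Fin n)) (j : ℕ) : (wd π).getD j 0 ≤ n := by
  rcases lt_or_ge j n with h | h
  · rw [wd_getD π j h]; have := (π ⟨j, h⟩).isLt; omega
  · rw [wd_getD_ge π j h]; omega

lemma rdes_insP {n : ℕ} (r : ℕ) (p : Fin (n + 1)) (π : Equiv.Perm (Fin n)) :
    rdes r (insP p π) = rdes r π + (if Cnd r (n + 1) (wd π) (p : ℕ) then 1 else 0) := by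
  rw [rdes_eq_wrdes, rdes_eq_wrdes, wd_insP]
  exact wrdes_insertIdx r (n + 1) (wd π) (wd_mem_lt π) p (by rw [wd_length]; omega)

lemma card_Cnd {n : ℕ} (r : ℕ) (hr : 1 ≤ r) (π : Equiv.Perm (Fin n)) :
    (Finset.univ.filter fun p : Fin (n + 1) => Cnd r (n + 1) (wd π) (p : ℕ)).card
      = (n + 1 - r) - rdes r π := by
  classical
  set S : Finset (Fin (n + 1)) :=
    Finset.univ.filter (fun p => (p : ℕ) < n ∧ (wd π).getD (p : ℕ) 0 + r ≤ n + 1) with hS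
  set B : Finset (Fin (n + 1)) :=
    Finset.univ.filter (fun p => 1 ≤ (p : ℕ) ∧ (p : ℕ) < n ∧
      (wd π).getD (p : ℕ) 0 + r ≤ (wd π).getD ((p : ℕ) - 1) 0) with hB
  have hBS : B ⊆ S := by
    intro q hq
    simp only [hB, hS, Finset.mem_filter, Finset.mem_univ, true_and] at hq ⊢
    have := wd_getD_le π ((q : ℕ) - 1)
    omega
  have hfilter : (Finset.univ.filter fun p : Fin (n + 1) => Cnd r (n + 1) (wd π) (p : ℕ)) = S \ B := by
    ext q
    simp only [hS, hB, Cnd, Finset.mem_sdiff, Finset.mem_filter, Finset.mem_univ, true_and,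
      wd_length]
    omega
  have hval : ∀ (q : Fin (n + 1)) (h : (q : ℕ) < n),
      (wd π).getD (q : ℕ) 0 = (π ⟨(q : ℕ), h⟩ : ℕ) + 1 := fun q h => wd_getD π _ h
  have hcardS : S.card = n + 1 - r := by
    have hst : S.card = ((Finset.Icc 1 n).filter (fun v => v + r ≤ n + 1)).card := by
      refine Finset.card_bij (fun p _ => (wd π).getD (p : ℕ) 0) ?_ ?_ ?_
      · intro q hq
        beta_reduce
        simp only [hS, Finset.mem_filter, Finset.mem_univ, true_and] at hq
        obtain ⟨h1, h2⟩ := hq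
        rw [Finset.mem_filter, Finset.mem_Icc, hval q h1]
        rw [hval q h1] at h2
        have := (π ⟨(q : ℕ), h1⟩).isLt
        exact ⟨⟨by omega, by omega⟩, by omega⟩
      · intro q1 hq1 q2 hq2 he
        beta_reduce at he
        simp only [hS, Finset.mem_filter, Finset.mem_univ, true_and] at hq1 hq2
        rw [hval q1 hq1.1, hval q2 hq2.1] at he
        have h3 : (⟨(q1 : ℕ), hq1.1⟩ : Fin n) = ⟨(q2 : ℕ), hq2.1⟩ :=
          π.injective (Fin.ext (by omega))
        have := congrArg Fin.val h3
        simp only at this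
        exact Fin.ext (by omega)
      · intro v hv
        rw [Finset.mem_filter, Finset.mem_Icc] at hv
        obtain ⟨⟨hv1, hv2⟩, hv3⟩ := hv
        set j : Fin n := π.symm ⟨v - 1, by omega⟩ with hj
        have hlt : (j : ℕ) < n := j.isLt
        have happ : π ⟨(j : ℕ), hlt⟩ = (⟨v - 1, by omega⟩ : Fin n) := by
          rw [Fin.eta, hj, Equiv.apply_symm_apply]
        refine ⟨⟨(j : ℕ), by omega⟩, ?_, ?_⟩
        · simp only [hS, Finset.mem_filter, Finset.mem_univ, true_and]
          refine ⟨hlt, ?_⟩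
          show (wd π).getD (j : ℕ) 0 + r ≤ n + 1
          rw [wd_getD π _ hlt, happ]
          show v - 1 + 1 + r ≤ n + 1
          omega
        · show (wd π).getD (j : ℕ) 0 = v
          rw [wd_getD π _ hlt, happ]
          show v - 1 + 1 = v
          omega
    rw [hst]
    have : (Finset.Icc 1 n).filter (fun v => v + r ≤ n + 1) = Finset.Icc 1 (n + 1 - r) := by
      ext v
      simp only [Finset.mem_filter, Finset.mem_Icc]
      omega
    rw [this, Nat.card_Icc]
    omega
  have hcardB : B.card = rdes r π := by
    rw [rdes, rDesSet]
    refine Finset.card_bij (fun p _ => (p : ℕ)) ?_ ?_ ?_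
    · intro q hq
      beta_reduce
      simp only [hB, Finset.mem_filter, Finset.mem_univ, true_and] at hq
      obtain ⟨h1, h2, h3⟩ := hq
      rw [Finset.mem_filter, Finset.mem_Icc]
      rw [pval_eq_wd π ((q : ℕ) + 1) (by omega) (by omega),
        pval_eq_wd π (q : ℕ) (by omega) (by omega)]
      have e1 : (q : ℕ) + 1 - 1 = (q : ℕ) := by omega
      rw [e1]
      exact ⟨⟨by omega, by omega⟩, h3⟩
    · intro q1 hq1 q2 hq2 he
      exact Fin.ext he
    · intro i hi
      rw [Finset.mem_filter, Finset.mem_Icc] at hi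
      obtain ⟨⟨h1, h2⟩, h3⟩ := hi
      refine ⟨⟨i, by omega⟩, ?_, rfl⟩
      simp only [hB, Finset.mem_filter, Finset.mem_univ, true_and]
      rw [pval_eq_wd π (i + 1) (by omega) (by omega),
        pval_eq_wd π i (by omega) (by omega)] at h3
      have e1 : i + 1 - 1 = i := by omega
      rw [e1] at h3
      exact ⟨by omega, by omega, h3⟩
  rw [hfilter, Finset.card_sdiff_of_subset hBS, hcardS, hcardB]

lemma count_insert {α : Type*} [Fintype α] (f : α → ℕ) (m k : ℕ) (C : α → Prop)
    [DecidablePred C] (hf : ∀ p, f p = m + if C p then 1 else 0) (t : ℕ)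
    (hC : (Finset.univ.filter C).card = t) :
    (Finset.univ.filter fun p => f p = k).card =
      (if k = m then Fintype.card α - t else if k = m + 1 then t else 0) := by
  classical
  by_cases hk : k = m
  · subst hk
    rw [if_pos rfl]
    have : (Finset.univ.filter fun p => f p = k) = Finset.univ.filter (fun p => ¬ C p) := by
      ext p
      simp only [Finset.mem_filter, Finset.mem_univ, true_and, hf p]
      split_ifs with h <;> simp [h]
    rw [this, Finset.filter_not, Finset.card_sdiff_of_subset (Finset.filter_subset _ _), hC,
      Finset.card_univ]
  · by_cases hk2 : k = m + 1
    · subst hk2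
      rw [if_neg hk, if_pos rfl]
      have : (Finset.univ.filter fun p => f p = m + 1) = Finset.univ.filter C := by
        ext p
        simp only [Finset.mem_filter, Finset.mem_univ, true_and, hf p]
        split_ifs with h <;> simp [h]
      rw [this, hC]
    · rw [if_neg hk, if_neg hk2]
      rw [Finset.card_eq_zero, Finset.filter_eq_empty_iff]
      intro p _
      rw [hf p]
      split_ifs <;> omega

lemma card_filter_comp_bij {α β : Type*} [Fintype α] [Fintype β]
    (F : α → β) (hF : Function.Bijective F) (P : β → Prop) [DecidablePred P] :
    (Finset.univ.filter P).card = (Finset.univ.filter (fun a => P (F a))).card := by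
  refine (Finset.card_bij (fun a _ => F a) ?_ ?_ ?_).symm
  · intro a ha
    beta_reduce
    simp only [Finset.mem_filter, Finset.mem_univ, true_and] at ha ⊢
    exact ha
  · intro a1 _ a2 _ h
    exact hF.1 h
  · intro b hb
    obtain ⟨a, rfl⟩ := hF.2 b
    simp only [Finset.mem_filter, Finset.mem_univ, true_and] at hb
    exact ⟨a, by simp [hb], rfl⟩

lemma card_filter_prod {α β : Type*} [Fintype α] [Fintype β] (Q : α × β → Prop)
    [DecidablePred Q] :
    (Finset.univ.filter Q).card = ∑ b : β, (Finset.univ.filter fun a => Q (a, b)).card := by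
  rw [Finset.card_filter, ← Finset.univ_product_univ, Finset.sum_product_right]
  exact Finset.sum_congr rfl fun b _ => (Finset.card_filter _ _).symm

lemma card_succ_eq_sum {n : ℕ} (r k : ℕ) (stat0 : Equiv.Perm (Fin n) → ℕ)
    (stat1 : Equiv.Perm (Fin (n + 1)) → ℕ)
    (F : Fin (n + 1) × Equiv.Perm (Fin n) → Equiv.Perm (Fin (n + 1)))
    (hF : Function.Bijective F)
    (C : Equiv.Perm (Fin n) → Fin (n + 1) → Prop) [∀ π, DecidablePred (C π)]
    (hstep : ∀ π p, stat1 (F (p, π)) = stat0 π + if C π p then 1 else 0)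
    (hcount : ∀ π, (Finset.univ.filter (C π)).card = (n + 1 - r) - stat0 π) :
    (Finset.univ.filter fun σ => stat1 σ = k).card
      = ∑ π : Equiv.Perm (Fin n),
          (if k = stat0 π then (n + 1) - ((n + 1 - r) - stat0 π)
           else if k = stat0 π + 1 then (n + 1 - r) - stat0 π else 0) := by
  rw [card_filter_comp_bij F hF, card_filter_prod]
  refine Finset.sum_congr rfl fun π _ => ?_
  rw [count_insert (fun p => stat1 (F (p, π))) (stat0 π) k (C π)
    (fun p => hstep π p) _ (hcount π)]
  rw [Fintype.card_fin]

lemma sum_comp_eq_of_equidist {α : Type*} [Fintype α] (f g : α → ℕ) (N : ℕ)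
    (hfN : ∀ a, f a < N) (hgN : ∀ a, g a < N)
    (h : ∀ m, (Finset.univ.filter fun a => f a = m).card
      = (Finset.univ.filter fun a => g a = m).card)
    (G : ℕ → ℕ) : ∑ a : α, G (f a) = ∑ a : α, G (g a) := by
  classical
  have key : ∀ (f : α → ℕ), (∀ a, f a < N) →
      ∑ a : α, G (f a)
        = ∑ m ∈ Finset.range N, (Finset.univ.filter fun a => f a = m).card * G m := by
    intro f hf
    rw [← Finset.sum_fiberwise_of_maps_to (g := f)
      (fun a _ => Finset.mem_range.mpr (hf a)) (fun a => G (f a))]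
    refine Finset.sum_congr rfl fun m _ => ?_
    rw [Finset.sum_congr rfl (fun a ha => by rw [(Finset.mem_filter.mp ha).2])]
    rw [Finset.sum_const, smul_eq_mul]
  rw [key f hfN, key g hgN]
  exact Finset.sum_congr rfl fun m _ => by rw [h m]

/-- Cycle-insertion of a new largest element: `j` now maps to the new top. -/
def insE {n : ℕ} (x : Fin (n + 1) × Equiv.Perm (Fin n)) : Equiv.Perm (Fin (n + 1)) :=
  insP (Fin.last n) x.2 * Equiv.swap x.1 (Fin.last n)

lemma insP_last_apply_last {n : ℕ} (π : Equiv.Perm (Fin n)) :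
    insP (Fin.last n) π (Fin.last n) = Fin.last n := insP_at _ _

lemma insP_last_apply_castSucc {n : ℕ} (π : Equiv.Perm (Fin n)) (j : Fin n) :
    insP (Fin.last n) π (Fin.castSucc j) = Fin.castSucc (π j) := by
  rw [show Fin.castSucc j = (Fin.last n).succAbove j from (Fin.succAbove_last_apply j).symm,
    insP_succAbove]

lemma insE_apply_fst {n : ℕ} (x : Fin (n + 1) × Equiv.Perm (Fin n)) :
    insE x x.1 = Fin.last n := by
  rw [insE, Equiv.Perm.mul_apply, Equiv.swap_apply_left, insP_last_apply_last]

lemma insE_bijective {n : ℕ} : Function.Bijective (insE (n := n)) := by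
  constructor
  · rintro ⟨j, π⟩ ⟨j', ρ⟩ h
    have hj : j = j' := by
      have h1 := insE_apply_fst (j, π)
      have h2 := insE_apply_fst (j', ρ)
      simp only at h1 h2
      rw [h] at h1
      exact (insE (j', ρ)).injective (h1.trans h2.symm)
    subst hj
    have : insP (Fin.last n) π = insP (Fin.last n) ρ := by
      have := congrArg (fun σ => σ * Equiv.swap j (Fin.last n)) h
      simpa [insE, mul_assoc] using this
    have := insP_bijective.1 (a₁ := (Fin.last n, π)) (a₂ := (Fin.last n, ρ)) this
    simp only [Prod.mk.injEq] at this
    rw [this.2]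
  · intro σ
    set j := σ.symm (Fin.last n) with hj
    have hσj : σ j = Fin.last n := by simp [hj]
    set τ := σ * Equiv.swap j (Fin.last n) with hτ
    have hτlast : τ (Fin.last n) = Fin.last n := by
      simp [hτ, Equiv.swap_apply_right, hσj]
    obtain ⟨⟨p, π⟩, hpπ⟩ := insP_bijective.2 τ
    simp only at hpπ
    have hp : p = Fin.last n := by
      have h1 : insP p π p = Fin.last n := insP_at p π
      rw [hpπ] at h1
      exact τ.injective (h1.trans hτlast.symm)
    subst hp
    refine ⟨(j, π), ?_⟩
    rw [insE]
    simp only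
    rw [hpπ, hτ, mul_assoc, Equiv.swap_mul_self, mul_one]

lemma pval_def {n : ℕ} (π : Equiv.Perm (Fin n)) (i : ℕ) (h1 : 1 ≤ i) (h2 : i ≤ n) :
    pval π i = (π ⟨i - 1, by omega⟩ : ℕ) + 1 := dif_pos ⟨h1, h2⟩

/-- Condition for cycle-insertion at `j` to create a new `r`-level excedance. -/
def CndE (n r : ℕ) (π : Equiv.Perm (Fin n)) (j : Fin (n + 1)) : Prop :=
  (j : ℕ) < n ∧ r ≤ (j : ℕ) + 1 ∧ pval π ((j : ℕ) + 1) ≤ (j : ℕ) + 1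

instance (n r : ℕ) (π : Equiv.Perm (Fin n)) (j : Fin (n + 1)) : Decidable (CndE n r π j) := by
  unfold CndE; infer_instance

lemma pval_insE_ne {n : ℕ} (j : Fin (n + 1)) (π : Equiv.Perm (Fin n)) (i : ℕ)
    (h1 : 1 ≤ i) (h2 : i ≤ n) (hne : i ≠ (j : ℕ) + 1) :
    pval (insE (j, π)) i = pval π i := by
  rw [pval_def _ i h1 (by omega), pval_def π i h1 h2]
  have hx1 : (⟨i - 1, by omega⟩ : Fin (n + 1)) ≠ j := by
    intro h
    exact hne (by have := congrArg Fin.val h; simp only at this; omega)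
  have hx2 : (⟨i - 1, by omega⟩ : Fin (n + 1)) ≠ Fin.last n := by
    intro h
    have := congrArg Fin.val h
    simp only [Fin.val_last] at this
    omega
  rw [insE]
  simp only
  rw [Equiv.Perm.mul_apply, Equiv.swap_apply_of_ne_of_ne hx1 hx2]
  rw [show (⟨i - 1, by omega⟩ : Fin (n + 1)) = Fin.castSucc ⟨i - 1, by omega⟩ from rfl,
    insP_last_apply_castSucc]
  simp

lemma pval_insE_at {n : ℕ} (j : Fin (n + 1)) (π : Equiv.Perm (Fin n)) (h : (j : ℕ) < n) :
    pval (insE (j, π)) ((j : ℕ) + 1) = n + 1 := by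
  rw [pval_def _ _ (by omega) (by omega)]
  have : (⟨(j : ℕ) + 1 - 1, by omega⟩ : Fin (n + 1)) = j := Fin.ext (by simp)
  rw [this]
  have := insE_apply_fst (j, π)
  simp only at this
  rw [this, Fin.val_last]

lemma pval_insE_top_lt {n : ℕ} (j : Fin (n + 1)) (π : Equiv.Perm (Fin n)) (h : (j : ℕ) < n) :
    pval (insE (j, π)) (n + 1) = (π ⟨(j : ℕ), h⟩ : ℕ) + 1 := by
  rw [pval_def _ _ (by omega) (by omega)]
  have e1 : (⟨n + 1 - 1, by omega⟩ : Fin (n + 1)) = Fin.last n := Fin.ext (by simp)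
  rw [e1, insE]
  simp only
  rw [Equiv.Perm.mul_apply, Equiv.swap_apply_right]
  conv_lhs => rw [show j = Fin.castSucc ⟨(j : ℕ), h⟩ from Fin.ext rfl, insP_last_apply_castSucc]
  simp

lemma pval_insE_top_eq {n : ℕ} (j : Fin (n + 1)) (π : Equiv.Perm (Fin n)) (h : (j : ℕ) = n) :
    pval (insE (j, π)) (n + 1) = n + 1 := by
  rw [pval_def _ _ (by omega) (by omega)]
  have e1 : (⟨n + 1 - 1, by omega⟩ : Fin (n + 1)) = Fin.last n := Fin.ext (by simp)
  have hj : j = Fin.last n := Fin.ext (by simpa using h)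
  rw [e1, insE]
  simp only
  rw [Equiv.Perm.mul_apply, hj, Equiv.swap_apply_right, insP_last_apply_last, Fin.val_last]

lemma excr_insE {n r : ℕ} (j : Fin (n + 1)) (π : Equiv.Perm (Fin n)) :
    excr r (insE (j, π)) = excr r π + if CndE n r π j then 1 else 0 := by
  rw [excr, excr, Finset.card_filter, Finset.card_filter]
  have hIcc : Finset.Icc 1 (n + 1) = insert (n + 1) (Finset.Icc 1 n) := by
    ext i
    simp only [Finset.mem_Icc, Finset.mem_insert]
    omega
  have hnotmem : (n + 1) ∉ Finset.Icc 1 n := by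
    simp only [Finset.mem_Icc]
    omega
  rw [hIcc, Finset.sum_insert hnotmem]
  rcases eq_or_lt_of_le (Nat.lt_succ_iff.mp j.isLt) with hj | hj
  · -- j is the last position: fixed point insertion
    have htop : pval (insE (j, π)) (n + 1) = n + 1 := pval_insE_top_eq j π hj
    have hCnd : ¬ CndE n r π j := by
      simp only [CndE]
      omega
    rw [if_neg hCnd]
    have hsum : ∀ i ∈ Finset.Icc 1 n,
        (if r ≤ i ∧ i < pval (insE (j, π)) i then 1 else 0)
          = (if r ≤ i ∧ i < pval π i then 1 else 0) := by
      intro i hi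
      rw [Finset.mem_Icc] at hi
      rw [pval_insE_ne j π i hi.1 hi.2 (by omega)]
    rw [Finset.sum_congr rfl hsum, htop]
    have : ¬ (r ≤ n + 1 ∧ n + 1 < n + 1) := by omega
    rw [if_neg this]
    omega
  · -- j < n
    have hcmem : (j : ℕ) + 1 ∈ Finset.Icc 1 n := by
      rw [Finset.mem_Icc]
      omega
    rw [← Finset.add_sum_erase _ _ hcmem, ← Finset.add_sum_erase _ _ hcmem]
    have hsum : ∀ i ∈ (Finset.Icc 1 n).erase ((j : ℕ) + 1),
        (if r ≤ i ∧ i < pval (insE (j, π)) i then 1 else 0)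
          = (if r ≤ i ∧ i < pval π i then 1 else 0) := by
      intro i hi
      obtain ⟨hne, hi⟩ := Finset.mem_erase.mp hi
      rw [Finset.mem_Icc] at hi
      rw [pval_insE_ne j π i hi.1 hi.2 hne]
    rw [Finset.sum_congr rfl hsum]
    have htop := pval_insE_top_lt j π hj
    have hat : pval (insE (j, π)) ((j : ℕ) + 1) = n + 1 := pval_insE_at j π hj
    rw [htop, hat]
    have hπlt := (π ⟨(j : ℕ), hj⟩).isLt
    have hπc : pval π ((j : ℕ) + 1) = (π ⟨(j : ℕ), hj⟩ : ℕ) + 1 := by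
      rw [pval_def π ((j : ℕ) + 1) (by omega) (by omega)]
      norm_num
    simp only [CndE, hπc]
    split_ifs <;> omega

lemma card_CndE {n : ℕ} (r : ℕ) (hr : 1 ≤ r) (π : Equiv.Perm (Fin n)) :
    (Finset.univ.filter (CndE n r π)).card = (n + 1 - r) - excr r π := by
  classical
  set S : Finset (Fin (n + 1)) :=
    Finset.univ.filter (fun j => (j : ℕ) < n ∧ r ≤ (j : ℕ) + 1) with hS
  set B : Finset (Fin (n + 1)) :=
    Finset.univ.filter (fun j => (j : ℕ) < n ∧ r ≤ (j : ℕ) + 1 ∧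
      (j : ℕ) + 1 < pval π ((j : ℕ) + 1)) with hB
  have hBS : B ⊆ S := by
    intro q hq
    simp only [hB, hS, Finset.mem_filter, Finset.mem_univ, true_and] at hq ⊢
    exact ⟨hq.1, hq.2.1⟩
  have hfilter : Finset.univ.filter (CndE n r π) = S \ B := by
    ext q
    simp only [hS, hB, CndE, Finset.mem_sdiff, Finset.mem_filter, Finset.mem_univ, true_and]
    omega
  have hcardS : S.card = n + 1 - r := by
    have hst : S.card = (Finset.Ico (r - 1) n).card := by
      refine Finset.card_bij (fun j _ => (j : ℕ)) ?_ ?_ ?_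
      · intro q hq
        beta_reduce
        simp only [hS, Finset.mem_filter, Finset.mem_univ, true_and] at hq
        rw [Finset.mem_Ico]
        omega
      · intro q1 _ q2 _ h
        exact Fin.ext h
      · intro x hx
        rw [Finset.mem_Ico] at hx
        refine ⟨⟨x, by omega⟩, ?_, rfl⟩
        simp only [hS, Finset.mem_filter, Finset.mem_univ, true_and]
        exact ⟨by omega, by omega⟩
    rw [hst, Nat.card_Ico]
    omega
  have hcardB : B.card = excr r π := by
    rw [excr]
    refine Finset.card_bij (fun j _ => (j : ℕ) + 1) ?_ ?_ ?_
    · intro q hq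
      beta_reduce
      simp only [hB, Finset.mem_filter, Finset.mem_univ, true_and] at hq
      rw [Finset.mem_filter, Finset.mem_Icc]
      exact ⟨⟨by omega, by omega⟩, hq.2.1, hq.2.2⟩
    · intro q1 _ q2 _ h
      beta_reduce at h
      exact Fin.ext (by omega)
    · intro i hi
      rw [Finset.mem_filter, Finset.mem_Icc] at hi
      obtain ⟨⟨h1, h2⟩, h3, h4⟩ := hi
      refine ⟨⟨i - 1, by omega⟩, ?_, by show i - 1 + 1 = i; omega⟩
      simp only [hB, Finset.mem_filter, Finset.mem_univ, true_and]
      have e : i - 1 + 1 = i := by omega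
      rw [e]
      exact ⟨by omega, h3, h4⟩
  rw [hfilter, Finset.card_sdiff_of_subset hBS, hcardS, hcardB]

lemma rdes_le {n r : ℕ} (π : Equiv.Perm (Fin n)) : rdes r π ≤ n := by
  rw [rdes, rDesSet]
  refine le_trans (Finset.card_filter_le _ _) ?_
  rw [Nat.card_Icc]
  omega

lemma excr_le {n r : ℕ} (π : Equiv.Perm (Fin n)) : excr r π ≤ n := by
  rw [excr]
  refine le_trans (Finset.card_filter_le _ _) ?_
  rw [Nat.card_Icc]
  omega


/-- For n ≥ 1 and r ≥ 1 the statistics rdes and exc_r are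
equidistributed over S_n: for every k, the number of π ∈ S_n with
rdes(π) = k equals the number of π ∈ S_n with exc_r(π) = k. -/
theorem rdes_excr_equidistributed (n r : ℕ) (hn : 1 ≤ n) (hr : 1 ≤ r) (k : ℕ) :
    (Finset.univ.filter (fun π : Equiv.Perm (Fin n) => rdes r π = k)).card =
    (Finset.univ.filter (fun π : Equiv.Perm (Fin n) => excr r π = k)).card := by
  clear hn
  induction n generalizing k with
  | zero =>
    have h0 : ∀ π : Equiv.Perm (Fin 0), rdes r π = 0 := by
      intro π
      rw [rdes, rDesSet, show (0 : ℕ) - 1 = 0 from rfl, Finset.Icc_eq_empty (by omega)]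
      simp
    have h0' : ∀ π : Equiv.Perm (Fin 0), excr r π = 0 := by
      intro π
      rw [excr, Finset.Icc_eq_empty (by omega)]
      simp
    simp_rw [h0, h0']
  | succ n IH =>
    rw [card_succ_eq_sum r k (rdes r) (rdes r) (fun x => insP x.1 x.2) insP_bijective
      (fun π p => Cnd r (n + 1) (wd π) (p : ℕ)) (fun π p => rdes_insP r p π)
      (fun π => card_Cnd r hr π)]
    rw [card_succ_eq_sum r k (excr r) (excr r) insE insE_bijective
      (fun π j => CndE n r π j) (fun π p => excr_insE p π)
      (fun π => card_CndE r hr π)]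
    exact sum_comp_eq_of_equidist (rdes r) (excr r) (n + 1)
      (fun π => Nat.lt_succ_of_le (rdes_le π))
      (fun π => Nat.lt_succ_of_le (excr_le π))
      IH
      (fun m => if k = m then (n + 1) - ((n + 1 - r) - m)
        else if k = m + 1 then (n + 1 - r) - m else 0)
end
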